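/- arXiv:1401.2574 — 6 statements merged into one kernel-verified Lean document; each statement's English description precedes it below -/
import Mathlib

section
/- Let b be a nonzero complex number, C > 0, and S an unbounded subset of the complex plane such that Re(b·λ) < -C|λ| for all λ ∈ S. If φ ∈ L¹[0,1] is continuous at 0, then ∫₀¹ e^{bλt} φ(t) dt = (φ(0) + o(1))/(-bλ) as λ → ∞ with λ ∈ S. -/
open Filter MeasureTheory

private lemma exp_int_real {r : ℝ} (hr : r ≠ 0) :
    ∫ x in (0:ℝ)..1, Real.exp (r * x) = (Real.exp r - 1) / r := by
  rw [intervalIntegral.integral_comp_mul_left (f := Real.exp) hr]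
  rw [mul_zero, mul_one, integral_exp, smul_eq_mul]
  rw [Real.exp_zero, div_eq_inv_mul]

private lemma aux_tendsto (a c : ℝ) (hc : 0 < c) :
    Tendsto (fun x : ℝ => a * (x * Real.exp (-(c * x)))) atTop (nhds 0) := by
  have h1 : Tendsto (fun y : ℝ => y * Real.exp (-y)) atTop (nhds 0) := by
    simpa using Real.tendsto_pow_mul_exp_neg_atTop_nhds_zero 1
  have h2 : Tendsto (fun x : ℝ => c * x) atTop atTop :=
    Tendsto.const_mul_atTop hc tendsto_id
  have h3 : Tendsto (fun x : ℝ => (c * x) * Real.exp (-(c * x))) atTop (nhds 0) :=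
    h1.comp h2
  have h4 : Tendsto (fun x : ℝ => (a / c) * ((c * x) * Real.exp (-(c * x)))) atTop
      (nhds ((a / c) * 0)) := h3.const_mul _
  have heq : (fun x : ℝ => a * (x * Real.exp (-(c * x))))
      = fun x : ℝ => (a / c) * ((c * x) * Real.exp (-(c * x))) := by
    funext x; field_simp
  rw [heq]
  simpa using h4

/-- Lemma `lem:int.e.q`(i): if `Re(b·λ) < -C|λ|` on an unbounded set `S`
and `φ ∈ L¹[0,1]` is continuous at `0`, then
`∫₀¹ e^{bλt} φ(t) dt = (φ(0) + o(1))/(-bλ)` as `λ → ∞`, `λ ∈ S`; equivalently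
`(-bλ)·∫₀¹ e^{bλt} φ(t) dt → φ(0)`. -/
theorem stmt0 (b : ℂ) (hb : b ≠ 0) (C : ℝ) (hC : 0 < C)
    (S : Set ℂ) (hS : ∀ R : ℝ, ∃ l ∈ S, R < ‖l‖)
    (hRe : ∀ l ∈ S, (b * l).re < -C * ‖l‖)
    (φ : ℝ → ℂ)
    (hφ : IntervalIntegrable φ MeasureTheory.volume 0 1)
    (hφ0 : ContinuousWithinAt φ (Set.Icc 0 1) 0) :
    Tendsto (fun l : ℂ => (-(b * l)) * ∫ t in (0:ℝ)..1, Complex.exp (b * l * t) * φ t)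
      ((Filter.comap (fun z : ℂ => ‖z‖) Filter.atTop) ⊓ Filter.principal S)
      (nhds (φ 0)) := by
  rw [Metric.tendsto_nhds]
  intro ε hε
  set nb : ℝ := ‖b‖ with hnb_def
  have hnb : 0 < nb := by
    simpa [hnb_def] using (norm_pos_iff.mpr hb)
  set ε' : ℝ := ε * C / (2 * nb) with hε'_def
  have hε' : 0 < ε' := by positivity
  -- continuity at 0 : get δ
  have hcont : {t : ℝ | ‖φ t - φ 0‖ < ε'} ∈ nhdsWithin 0 (Set.Icc (0:ℝ) 1) := by
    have h := hφ0 (Metric.ball_mem_nhds (φ 0) hε')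
    rw [Filter.mem_map] at h
    refine Filter.mem_of_superset h ?_
    intro t ht
    simpa [Metric.mem_ball, dist_eq_norm] using ht
  obtain ⟨δ, hδpos, hδ⟩ := Metric.mem_nhdsWithin_iff.mp hcont
  -- total variation constant
  have hφsub : IntervalIntegrable (fun t => φ t - φ 0) volume 0 1 :=
    hφ.sub intervalIntegrable_const
  set M : ℝ := ∫ t in (0:ℝ)..1, ‖φ t - φ 0‖ with hM_def
  have hM0 : 0 ≤ M :=
    intervalIntegral.integral_nonneg (by norm_num) (fun t _ => norm_nonneg _)
  -- choose R from the vanishing tail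
  have hψ : Tendsto (fun x : ℝ => nb * M * (x * Real.exp (-(C * δ * x)))
      + ‖φ 0‖ * Real.exp (-(C * x))) atTop (nhds 0) := by
    have h1 := aux_tendsto (nb * M) (C * δ) (by positivity)
    have h2 : Tendsto (fun x : ℝ => ‖φ 0‖ * Real.exp (-(C * x)))
        atTop (nhds 0) := by
      have : Tendsto (fun x : ℝ => Real.exp (-(C * x))) atTop (nhds 0) := by
        apply Real.tendsto_exp_atBot.comp
        exact tendsto_neg_atTop_atBot.comp (Tendsto.const_mul_atTop hC tendsto_id)
      simpa using this.const_mul (‖φ 0‖)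
    simpa using h1.add h2
  have hψev : ∀ᶠ x in atTop, nb * M * (x * Real.exp (-(C * δ * x)))
      + ‖φ 0‖ * Real.exp (-(C * x)) < ε / 2 := by
    have := hψ.eventually (gt_mem_nhds (show (0:ℝ) < ε / 2 by positivity))
    exact this
  obtain ⟨R, hR⟩ := (eventually_atTop).mp hψev
  -- eventual bound in the filter
  have habs : ∀ᶠ l : ℂ in comap (fun z : ℂ => ‖z‖) atTop, max R 1 ≤ ‖l‖ :=
    tendsto_comap.eventually (eventually_ge_atTop _)
  rw [eventually_inf_principal]
  filter_upwards [habs] with l hl hlS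
  -- setup
  set z : ℂ := b * l with hz_def
  have hlabs1 : (1:ℝ) ≤ ‖l‖ := le_trans (le_max_right _ _) hl
  have hlabsR : R ≤ ‖l‖ := le_trans (le_max_left _ _) hl
  have hlpos : (0:ℝ) < ‖l‖ := lt_of_lt_of_le one_pos hlabs1
  have hl0 : l ≠ 0 := by
    intro h; rw [h] at hlpos; simp at hlpos
  have hz0 : z ≠ 0 := mul_ne_zero hb hl0
  set r : ℝ := z.re with hr_def
  have hrlt : r < -C * ‖l‖ := hRe l hlS
  have hrneg : r < 0 := lt_of_lt_of_le hrlt (by nlinarith)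
  have hzabs : ‖z‖ = nb * ‖l‖ := by
    simp [hz_def, hnb_def, map_mul]
  -- norm of exp
  have hexpnorm : ∀ t : ℝ, ‖Complex.exp (z * t)‖ = Real.exp (r * t) := by
    intro t
    rw [Complex.norm_exp]
    congr 1
    simp [hr_def, Complex.mul_re]
  -- integrability facts
  have hexpc : ∀ w : ℂ, ContinuousOn (fun t : ℝ => Complex.exp (w * t))
      (Set.uIcc (0:ℝ) 1) := by
    intro w
    apply Continuous.continuousOn
    exact Complex.continuous_exp.comp (continuous_const.mul Complex.continuous_ofReal)
  have hI : IntervalIntegrable (fun t => Complex.exp (z * t) * φ t) volume 0 1 :=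
    hφ.continuousOn_mul (hexpc z)
  have hI2 : IntervalIntegrable (fun t => Complex.exp (z * t) * (φ t - φ 0)) volume 0 1 :=
    hφsub.continuousOn_mul (hexpc z)
  have hIe : IntervalIntegrable (fun t => Complex.exp (z * t)) volume 0 1 :=
    ((hexpc z).intervalIntegrable)
  -- key identity
  have key : ∫ t in (0:ℝ)..1, Complex.exp (z * t) * (φ t - φ 0)
      = (∫ t in (0:ℝ)..1, Complex.exp (z * t) * φ t)
        - φ 0 * ((Complex.exp z - 1) / z) := by
    have heq : (fun t : ℝ => Complex.exp (z * t) * (φ t - φ 0))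
        = fun t : ℝ => Complex.exp (z * t) * φ t - φ 0 * Complex.exp (z * t) := by
      funext t; ring
    rw [heq, intervalIntegral.integral_sub hI (hIe.const_mul _),
      intervalIntegral.integral_const_mul, integral_exp_mul_complex hz0]
    simp
  -- main algebraic rewrite of the quantity
  have main_eq : (-(b * l)) * (∫ t in (0:ℝ)..1, Complex.exp (b * l * t) * φ t) - φ 0
      = (-z) * (∫ t in (0:ℝ)..1, Complex.exp (z * t) * (φ t - φ 0))
        - φ 0 * Complex.exp z := by
    rw [key]
    field_simp [hz0]
    ring
  rw [dist_eq_norm, main_eq]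
  -- bound norms
  have hb1 : ‖(-z) * (∫ t in (0:ℝ)..1, Complex.exp (z * t) * (φ t - φ 0))
      - φ 0 * Complex.exp z‖
      ≤ ‖z‖ * ‖∫ t in (0:ℝ)..1, Complex.exp (z * t) * (φ t - φ 0)‖
        + ‖φ 0‖ * Real.exp r := by
    refine le_trans (norm_sub_le _ _) ?_
    gcongr
    · simp
    · rw [norm_mul, Complex.norm_exp]
  -- pointwise norm bound and integral bound
  have hpw : ∀ t ∈ Set.Icc (0:ℝ) 1,
      ‖Complex.exp (z * t) * (φ t - φ 0)‖
      ≤ ε' * Real.exp (r * t) + Real.exp (r * δ) * ‖φ t - φ 0‖ := by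
    intro t ht
    rw [norm_mul, hexpnorm]
    by_cases hc : |t| < δ
    · have h1 : ‖φ t - φ 0‖ ≤ ε' := by
        have hmem : t ∈ Metric.ball (0:ℝ) δ ∩ Set.Icc 0 1 :=
          ⟨by simpa [Metric.mem_ball, Real.dist_eq] using hc, ht⟩
        exact (hδ hmem).le
      have : Real.exp (r * t) * ‖φ t - φ 0‖ ≤ ε' * Real.exp (r * t) := by
        rw [mul_comm]
        exact mul_le_mul h1 le_rfl (Real.exp_pos _).le hε'.le
      refine this.trans ?_
      nlinarith [Real.exp_pos (r * δ), norm_nonneg (φ t - φ 0)]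
    · have htδ : δ ≤ t := by
        rw [abs_of_nonneg ht.1] at hc
        linarith [not_lt.mp hc]
      have h1 : Real.exp (r * t) ≤ Real.exp (r * δ) := by
        apply Real.exp_le_exp.mpr
        nlinarith
      have : Real.exp (r * t) * ‖φ t - φ 0‖ ≤ Real.exp (r * δ) * ‖φ t - φ 0‖ :=
        mul_le_mul h1 le_rfl (norm_nonneg _) (Real.exp_pos _).le
      refine this.trans ?_
      nlinarith [Real.exp_pos (r * t)]
  have hInorm : IntervalIntegrable (fun t => ‖Complex.exp (z * t) * (φ t - φ 0)‖)
      volume 0 1 := hI2.norm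
  have hIexp : IntervalIntegrable (fun t : ℝ => Real.exp (r * t)) volume 0 1 :=
    (Real.continuous_exp.comp (continuous_const.mul continuous_id)).intervalIntegrable 0 1
  have hIrhs : IntervalIntegrable
      (fun t : ℝ => ε' * Real.exp (r * t) + Real.exp (r * δ) * ‖φ t - φ 0‖)
      volume 0 1 := (hIexp.const_mul _).add (hφsub.norm.const_mul _)
  have hint_bound : ‖∫ t in (0:ℝ)..1, Complex.exp (z * t) * (φ t - φ 0)‖
      ≤ ε' * ((Real.exp r - 1) / r) + Real.exp (r * δ) * M := by
    refine le_trans (intervalIntegral.norm_integral_le_integral_norm (by norm_num)) ?_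
    have := intervalIntegral.integral_mono_on (by norm_num : (0:ℝ) ≤ 1)
      hInorm hIrhs hpw
    refine this.trans ?_
    rw [intervalIntegral.integral_add (hIexp.const_mul _) (hφsub.norm.const_mul _),
      intervalIntegral.integral_const_mul, intervalIntegral.integral_const_mul,
      exp_int_real hrneg.ne]
  -- now assemble
  have hClabs : 0 < C * ‖l‖ := by positivity
  have hnegr : C * ‖l‖ < -r := by linarith
  have hT1 : ‖z‖ * (ε' * ((Real.exp r - 1) / r)) ≤ ε / 2 := by
    have hfrac : (Real.exp r - 1) / r ≤ 1 / (-r) := by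
      have heq : (Real.exp r - 1) / r = (1 - Real.exp r) / (-r) := by
        rw [← neg_div_neg_eq]; ring_nf
      rw [heq, div_le_div_iff_of_pos_right (by linarith : (0:ℝ) < -r)]
      linarith [Real.exp_pos r]
    have h1 : ‖z‖ * (ε' * ((Real.exp r - 1) / r))
        ≤ nb * ‖l‖ * (ε' * (1 / (-r))) := by
      rw [hzabs]
      exact mul_le_mul_of_nonneg_left (mul_le_mul_of_nonneg_left hfrac hε'.le)
        (by positivity)
    refine h1.trans ?_
    have h2 : nb * ‖l‖ * (ε' * (1 / (-r)))
        ≤ nb * ‖l‖ * (ε' * (1 / (C * ‖l‖))) := by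
      gcongr
    refine h2.trans ?_
    have heq2 : nb * ‖l‖ * (ε' * (1 / (C * ‖l‖))) = ε / 2 := by
      rw [hε'_def]
      field_simp
    exact le_of_eq heq2
  have hT2 : ‖z‖ * (Real.exp (r * δ) * M)
      ≤ nb * M * (‖l‖ * Real.exp (-(C * δ * ‖l‖))) := by
    rw [hzabs]
    have : Real.exp (r * δ) ≤ Real.exp (-(C * δ * ‖l‖)) := by
      apply Real.exp_le_exp.mpr
      nlinarith
    calc nb * ‖l‖ * (Real.exp (r * δ) * M)
        ≤ nb * ‖l‖ * (Real.exp (-(C * δ * ‖l‖)) * M) := by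
          gcongr
      _ = nb * M * (‖l‖ * Real.exp (-(C * δ * ‖l‖))) := by ring
  have hT3 : ‖φ 0‖ * Real.exp r
      ≤ ‖φ 0‖ * Real.exp (-(C * ‖l‖)) :=
    mul_le_mul_of_nonneg_left (Real.exp_le_exp.mpr (by linarith))
      (norm_nonneg _)
  have htail := hR (‖l‖) hlabsR
  calc ‖(-z) * (∫ t in (0:ℝ)..1, Complex.exp (z * t) * (φ t - φ 0))
      - φ 0 * Complex.exp z‖
      ≤ ‖z‖ * ‖∫ t in (0:ℝ)..1, Complex.exp (z * t) * (φ t - φ 0)‖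
        + ‖φ 0‖ * Real.exp r := hb1
    _ ≤ ‖z‖ * (ε' * ((Real.exp r - 1) / r) + Real.exp (r * δ) * M)
        + ‖φ 0‖ * Real.exp r := by
          have := mul_le_mul_of_nonneg_left hint_bound (norm_nonneg z)
          linarith
    _ = ‖z‖ * (ε' * ((Real.exp r - 1) / r))
        + ‖z‖ * (Real.exp (r * δ) * M)
        + ‖φ 0‖ * Real.exp r := by ring
    _ ≤ ε / 2 + (nb * M * (‖l‖ * Real.exp (-(C * δ * ‖l‖)))
        + ‖φ 0‖ * Real.exp (-(C * ‖l‖))) := by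
          have := add_le_add (add_le_add hT1 hT2) hT3
          linarith
    _ < ε / 2 + ε / 2 := by linarith
    _ = ε := by ring
end

section
/- Let b be a nonzero complex number, C > 0, and S an unbounded subset of the complex plane such that Re(b·λ) < -C|λ| for all λ ∈ S. If φ ∈ L¹[0,1] is bounded in a neighborhood of 0, then ∫₀¹ |e^{bλt} φ(t)| dt = O(|λ|^{-1}) as λ → ∞ with λ ∈ S. -/
open Filter MeasureTheory

/-- Lemma `lem:int.e.q`(ii): if `Re(b·λ) < -C|λ|` on an unbounded set `S`
and `φ ∈ L¹[0,1]` is bounded near `0`, then `∫₀¹ |e^{bλt} φ(t)| dt = O(|λ|⁻¹)` as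
`λ → ∞`, `λ ∈ S`. -/
theorem stmt1 (b : ℂ) (hb : b ≠ 0) (C : ℝ) (hC : 0 < C)
    (S : Set ℂ) (hS : ∀ R : ℝ, ∃ l ∈ S, R < ‖l‖)
    (hRe : ∀ l ∈ S, (b * l).re < -C * ‖l‖)
    (φ : ℝ → ℂ)
    (hφ : IntervalIntegrable φ MeasureTheory.volume 0 1)
    (hbd : ∃ δ > (0:ℝ), ∃ K : ℝ, ∀ t ∈ Set.Icc (0:ℝ) δ, ‖φ t‖ ≤ K) :
    ∃ M > (0:ℝ), ∃ R > (0:ℝ), ∀ l ∈ S, R < ‖l‖ →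
      (∫ t in (0:ℝ)..1, ‖Complex.exp (b * l * t) * φ t‖) ≤ M / ‖l‖ := by
  obtain ⟨δ₀, hδ₀, K, hK⟩ := hbd
  set δ : ℝ := min δ₀ 1 with hδdef
  have hδpos : 0 < δ := lt_min hδ₀ one_pos
  have hδle : δ ≤ 1 := min_le_right _ _
  have hKbd : ∀ t ∈ Set.Icc (0:ℝ) δ, ‖φ t‖ ≤ K := fun t ht =>
    hK t ⟨ht.1, ht.2.trans (min_le_left _ _)⟩
  have hK0 : (0:ℝ) ≤ K := le_trans (norm_nonneg _) (hKbd 0 ⟨le_refl _, hδpos.le⟩)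
  set I : ℝ := ∫ t in (0:ℝ)..1, ‖φ t‖ with hIdef
  have hI0 : 0 ≤ I :=
    intervalIntegral.integral_nonneg (by norm_num) (fun t _ => norm_nonneg _)
  refine ⟨max 1 (K / C + I / (C * δ)),
    lt_of_lt_of_le one_pos (le_max_left _ _), 1, one_pos, ?_⟩
  intro l hlS hl1
  set a : ℝ := C * ‖l‖ with hadef
  have hl0 : (0:ℝ) < ‖l‖ := lt_trans one_pos hl1
  have ha : 0 < a := mul_pos hC hl0
  -- pointwise exponential bound
  have hexp : ∀ t : ℝ, 0 ≤ t →
      ‖Complex.exp (b * l * t)‖ ≤ Real.exp (-(a * t)) := by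
    intro t ht
    rw [Complex.norm_exp]
    apply Real.exp_le_exp.mpr
    have h1 : (b * l * (t:ℂ)).re = (b * l).re * t := by
      simp [Complex.mul_re]
    rw [h1]
    have h2 := hRe l hlS
    nlinarith
  -- integrability
  have hcont : ContinuousOn (fun t : ℝ => Complex.exp (b * l * t)) (Set.uIcc 0 1) :=
    (Complex.continuous_exp.comp (by continuity)).continuousOn
  have hfi : IntervalIntegrable (fun t => Complex.exp (b * l * t) * φ t) volume 0 1 :=
    hφ.continuousOn_mul hcont
  have hsub1 : Set.uIcc (0:ℝ) δ ⊆ Set.uIcc (0:ℝ) 1 :=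
    Set.uIcc_subset_uIcc (by simp) (by simp [Set.mem_uIcc]; exact ⟨hδpos.le, hδle⟩)
  have hsub2 : Set.uIcc δ (1:ℝ) ⊆ Set.uIcc (0:ℝ) 1 :=
    Set.uIcc_subset_uIcc (by simp [Set.mem_uIcc]; exact ⟨hδpos.le, hδle⟩) (by simp)
  have hfi1 : IntervalIntegrable (fun t => ‖Complex.exp (b * l * t) * φ t‖) volume 0 δ :=
    (hfi.mono_set hsub1).norm
  have hfi2 : IntervalIntegrable (fun t => ‖Complex.exp (b * l * t) * φ t‖) volume δ 1 :=
    (hfi.mono_set hsub2).norm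
  -- split the integral
  have hsplit : (∫ t in (0:ℝ)..1, ‖Complex.exp (b * l * t) * φ t‖)
      = (∫ t in (0:ℝ)..δ, ‖Complex.exp (b * l * t) * φ t‖)
        + (∫ t in δ..1, ‖Complex.exp (b * l * t) * φ t‖) :=
    (intervalIntegral.integral_add_adjacent_intervals hfi1 hfi2).symm
  -- piece 1
  have h1 : (∫ t in (0:ℝ)..δ, ‖Complex.exp (b * l * t) * φ t‖) ≤ K / a := by
    have hrhs : IntervalIntegrable (fun t : ℝ => K * Real.exp (-(a * t))) volume 0 δ :=
      (Continuous.intervalIntegrable (by continuity) 0 δ)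
    have hmono : (∫ t in (0:ℝ)..δ, ‖Complex.exp (b * l * t) * φ t‖)
        ≤ ∫ t in (0:ℝ)..δ, K * Real.exp (-(a * t)) := by
      apply intervalIntegral.integral_mono_on hδpos.le hfi1 hrhs
      intro t ht
      rw [norm_mul]
      have e1 := hexp t ht.1
      have e2 := hKbd t ht
      have e3 : (0:ℝ) ≤ Real.exp (-(a * t)) := (Real.exp_pos _).le
      calc ‖Complex.exp (b * l * t)‖ * ‖φ t‖
          ≤ Real.exp (-(a * t)) * K := by
            exact mul_le_mul e1 e2 (norm_nonneg _) e3
        _ = K * Real.exp (-(a * t)) := mul_comm _ _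
    have hcomp : (∫ t in (0:ℝ)..δ, Real.exp (-(a * t)))
        = (1 - Real.exp (-(a * δ))) / a := by
      have : (∫ t in (0:ℝ)..δ, Real.exp ((-a) * t))
          = (-a)⁻¹ • ∫ x in ((-a) * 0)..((-a) * δ), Real.exp x :=
        intervalIntegral.integral_comp_mul_left Real.exp (neg_ne_zero.mpr ha.ne')
      simp only [neg_mul, mul_zero] at this
      rw [this, integral_exp]
      rw [Real.exp_zero, smul_eq_mul, inv_neg, div_eq_mul_inv]
      ring
    rw [intervalIntegral.integral_const_mul] at hmono
    rw [hcomp, mul_div_assoc'] at hmono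
    refine hmono.trans ?_
    have e0 : (0:ℝ) < Real.exp (-(a * δ)) := Real.exp_pos _
    gcongr
    nlinarith
  -- piece 2
  have hφ1 : IntervalIntegrable (fun t => ‖φ t‖) volume δ 1 := (hφ.mono_set hsub2).norm
  have h2 : (∫ t in δ..1, ‖Complex.exp (b * l * t) * φ t‖)
      ≤ Real.exp (-(a * δ)) * I := by
    have hmono : (∫ t in δ..1, ‖Complex.exp (b * l * t) * φ t‖)
        ≤ ∫ t in δ..1, Real.exp (-(a * δ)) * ‖φ t‖ := by
      apply intervalIntegral.integral_mono_on hδle hfi2 (hφ1.const_mul _)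
      intro t ht
      rw [norm_mul]
      have e1 : ‖Complex.exp (b * l * t)‖ ≤ Real.exp (-(a * t)) :=
        hexp t (hδpos.le.trans ht.1)
      have e2 : Real.exp (-(a * t)) ≤ Real.exp (-(a * δ)) := by
        apply Real.exp_le_exp.mpr
        nlinarith [ht.1]
      exact mul_le_mul (e1.trans e2) le_rfl (norm_nonneg _) (Real.exp_pos _).le
    rw [intervalIntegral.integral_const_mul] at hmono
    refine hmono.trans ?_
    apply mul_le_mul_of_nonneg_left _ (Real.exp_pos _).le
    have hφ0 : IntervalIntegrable (fun t => ‖φ t‖) volume 0 δ := (hφ.mono_set hsub1).norm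
    have hIs : I = (∫ t in (0:ℝ)..δ, ‖φ t‖) + ∫ t in δ..1, ‖φ t‖ :=
      (intervalIntegral.integral_add_adjacent_intervals hφ0 hφ1).symm
    have hnn : 0 ≤ ∫ t in (0:ℝ)..δ, ‖φ t‖ :=
      intervalIntegral.integral_nonneg hδpos.le (fun t _ => norm_nonneg _)
    linarith [hIs]
  -- exp(-(aδ)) ≤ 1/(aδ)
  have hexp2 : Real.exp (-(a * δ)) ≤ 1 / (a * δ) := by
    rw [Real.exp_neg, one_div]
    rw [inv_le_inv₀ (Real.exp_pos _) (by positivity)]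
    have := Real.add_one_le_exp (a * δ)
    linarith
  calc (∫ t in (0:ℝ)..1, ‖Complex.exp (b * l * t) * φ t‖)
      = (∫ t in (0:ℝ)..δ, ‖Complex.exp (b * l * t) * φ t‖)
        + (∫ t in δ..1, ‖Complex.exp (b * l * t) * φ t‖) := hsplit
    _ ≤ K / a + Real.exp (-(a * δ)) * I := add_le_add h1 h2
    _ ≤ K / a + I / (a * δ) := by
        have : Real.exp (-(a * δ)) * I ≤ (1 / (a * δ)) * I :=
          mul_le_mul_of_nonneg_right hexp2 hI0
        have h4 : (1 / (a * δ)) * I = I / (a * δ) := by ring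
        linarith [h4 ▸ this]
    _ = (K / C + I / (C * δ)) / ‖l‖ := by
        rw [hadef]
        ring
    _ ≤ max 1 (K / C + I / (C * δ)) / ‖l‖ := by
        gcongr
        exact le_max_right _ _
end

section
/- Let B = B* be an invertible selfadjoint diagonal n×n matrix, and C, D ∈ ℂ^{n×n} with rank(C D) = n. Let P₊, P₋ be the spectral projections onto the positive and negative parts of the spectrum of B. If C B C* - D B D* ≥ 0 (positive semidefinite), then the matrix T₋ = C P₊ + D P₋ is invertible. -/
open Matrix
open scoped ComplexOrder

private lemma quad_eq (n : ℕ) (b : Fin n → ℝ) (C : Matrix (Fin n) (Fin n) ℂ) (y : Fin n → ℂ) :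
    star y ⬝ᵥ (C * Matrix.diagonal (fun j => (b j : ℂ)) * Cᴴ) *ᵥ y
    = ∑ j, ((b j * ‖(Cᴴ *ᵥ y) j‖ ^ 2 : ℝ) : ℂ) := by
  rw [← mulVec_mulVec, ← mulVec_mulVec, dotProduct_mulVec,
    show star y ᵥ* C = star (Cᴴ *ᵥ y) by rw [star_mulVec, conjTranspose_conjTranspose]]
  simp only [dotProduct, mulVec_diagonal, Pi.star_apply]
  refine Finset.sum_congr rfl fun j _ => ?_
  rw [show star ((Cᴴ *ᵥ y) j) * ((b j : ℂ) * (Cᴴ *ᵥ y) j)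
      = (b j : ℂ) * ((Cᴴ *ᵥ y) j * star ((Cᴴ *ᵥ y) j)) by ring,
    RCLike.star_def, Complex.mul_conj']
  push_cast
  ring

/-- Lemma `lem:accum.detTBCD`: let `B = B*` be an invertible selfadjoint
diagonal matrix with spectral projections `P₊`, `P₋` onto its positive/negative parts.  If
`rank (C D) = n` and `C B C* - D B D* ≥ 0`, then `T₋ = C P₊ + D P₋` is invertible. -/
theorem stmt6 (n : ℕ) (b : Fin n → ℝ) (hb : ∀ j, b j ≠ 0)
    (C D : Matrix (Fin n) (Fin n) ℂ)
    (hrank : (Matrix.fromCols C D).rank = n)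
    (hacc : (C * Matrix.diagonal (fun j => (b j : ℂ)) * Cᴴ
           - D * Matrix.diagonal (fun j => (b j : ℂ)) * Dᴴ).PosSemidef) :
    IsUnit (C * Matrix.diagonal (fun j => if 0 < b j then (1:ℂ) else 0)
          + D * Matrix.diagonal (fun j => if b j < 0 then (1:ℂ) else 0)) := by
  set T := C * Matrix.diagonal (fun j => if 0 < b j then (1:ℂ) else 0)
          + D * Matrix.diagonal (fun j => if b j < 0 then (1:ℂ) else 0) with hT
  -- key: ∀ y, Tᴴ *ᵥ y = 0 → y = 0
  have key : ∀ y : Fin n → ℂ, Tᴴ *ᵥ y = 0 → y = 0 := by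
    intro y hy
    set u := Cᴴ *ᵥ y with hu
    set w := Dᴴ *ᵥ y with hw
    -- componentwise: p₊ j * u j + p₋ j * w j = 0
    have hcomp : ∀ j, (if 0 < b j then (1:ℂ) else 0) * u j
        + (if b j < 0 then (1:ℂ) else 0) * w j = 0 := by
      intro j
      have := congrFun hy j
      rw [hT] at this
      simpa [conjTranspose_add, conjTranspose_mul, diagonal_conjTranspose,
        add_mulVec, mulVec_mulVec, ← mulVec_mulVec, mulVec_diagonal,
        apply_ite star, hu, hw] using this
    have hupos : ∀ j, 0 < b j → u j = 0 := by
      intro j hj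
      have := hcomp j
      have hneg : ¬ b j < 0 := not_lt.mpr hj.le
      simpa [hj, hneg] using this
    have hwneg : ∀ j, b j < 0 → w j = 0 := by
      intro j hj
      have := hcomp j
      have hpos : ¬ 0 < b j := not_lt.mpr hj.le
      simpa [hj, hpos] using this
    -- quadratic form
    have hq := hacc.dotProduct_mulVec_nonneg y
    rw [sub_mulVec, dotProduct_sub, quad_eq n b C y, quad_eq n b D y] at hq
    rw [← Complex.ofReal_sum, ← Complex.ofReal_sum, ← Complex.ofReal_sub] at hq
    have hq' : (0:ℝ) ≤ ∑ j, b j * ‖u j‖ ^ 2 - ∑ j, b j * ‖w j‖ ^ 2 := by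
      exact_mod_cast hq
    rw [← Finset.sum_sub_distrib] at hq'
    have hterm : ∀ j ∈ Finset.univ, b j * ‖u j‖ ^ 2 - b j * ‖w j‖ ^ 2 ≤ 0 := by
      intro j _
      rcases (hb j).lt_or_gt with hj | hj
      · have : w j = 0 := hwneg j hj
        simp only [this, norm_zero]
        nlinarith [sq_nonneg ‖u j‖]
      · have : u j = 0 := hupos j hj
        simp only [this, norm_zero]
        nlinarith [sq_nonneg ‖w j‖]
    have hsum0 : ∑ j, (b j * ‖u j‖ ^ 2 - b j * ‖w j‖ ^ 2) = 0 :=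
      le_antisymm (Finset.sum_nonpos hterm) hq'
    have hall : ∀ j ∈ Finset.univ, b j * ‖u j‖ ^ 2 - b j * ‖w j‖ ^ 2 = 0 :=
      (Finset.sum_eq_zero_iff_of_nonpos hterm).mp hsum0
    -- conclude u = 0 and w = 0
    have hu0 : u = 0 := by
      funext j
      rcases (hb j).lt_or_gt with hj | hj
      · have h0 := hall j (Finset.mem_univ j)
        have hw0 : w j = 0 := hwneg j hj
        simp only [hw0, norm_zero] at h0
        have : ‖u j‖ ^ 2 = 0 := by
          rcases mul_eq_zero.mp (by linarith : b j * ‖u j‖ ^ 2 = 0) with h | h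
          · exact absurd h (hb j)
          · exact h
        simpa using pow_eq_zero_iff (n := 2) (by norm_num) |>.mp this |> norm_eq_zero.mp
      · exact hupos j hj
    have hw0 : w = 0 := by
      funext j
      rcases (hb j).lt_or_gt with hj | hj
      · exact hwneg j hj
      · have h0 := hall j (Finset.mem_univ j)
        have hu0' : u j = 0 := hupos j hj
        simp only [hu0', norm_zero] at h0
        have : ‖w j‖ ^ 2 = 0 := by
          rcases mul_eq_zero.mp (by linarith : b j * ‖w j‖ ^ 2 = 0) with h | h
          · exact absurd h (hb j)
          · exact h
        simpa using pow_eq_zero_iff (n := 2) (by norm_num) |>.mp this |> norm_eq_zero.mp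
    -- rank argument
    have hfull : (Matrix.fromCols C D)ᴴ *ᵥ y = 0 := by
      rw [conjTranspose_fromCols_eq_fromRows_conjTranspose, fromRows_mulVec, ← hu, ← hw,
        hu0, hw0]
      ext (_ | _) <;> simp
    have h1 : (Matrix.fromCols C D)ᴴ.rank = n := by
      rw [Matrix.rank_conjTranspose]; exact hrank
    have h2 := LinearMap.finrank_range_add_finrank_ker ((Matrix.fromCols C D)ᴴ.mulVecLin)
    rw [Matrix.rank] at h1
    simp [h1, Module.finrank_pi] at h2
    have hmem : y ∈ LinearMap.ker (Matrix.fromCols C D)ᴴ.mulVecLin := hfull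
    rwa [h2, Submodule.mem_bot] at hmem
  -- injectivity → IsUnit
  rw [← Matrix.isUnit_conjTranspose, ← Matrix.mulVec_injective_iff_isUnit]
  change Function.Injective Tᴴ.mulVecLin
  rw [← LinearMap.ker_eq_bot, LinearMap.ker_eq_bot']
  intro y hy
  exact key y hy
end

section
/- Let B be an invertible selfadjoint diagonal n×n matrix, C, D ∈ ℂ^{n×n} with rank(C D) = n, and let B̃ = diag(B^{-1}, -B^{-1}) define the Hermitian form w(u,v) = ⟨B̃u,v⟩ on ℂ^{2n}. Then the subspace H₁ = ker(C D) is w-nonpositive (i.e., ⟨B̃u,u⟩ ≤ 0 for all u ∈ H₁) if and only if C B C* - D B D* ≥ 0. -/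
open Matrix
open scoped ComplexOrder

open Finset Module

namespace Stmt7Aux

variable {ι : Type*} [Fintype ι]

noncomputable def Qf (e : ι → ℝ) (u : ι → ℂ) : ℝ := ∑ i, e i * ‖u i‖ ^ 2

noncomputable def Wf (e : ι → ℝ) (u v : ι → ℂ) : ℂ :=
  ∑ i, (e i : ℂ) * (starRingEnd ℂ (u i) * v i)

lemma re_term (r : ℝ) (z : ℂ) : ((r : ℂ) * (starRingEnd ℂ z * z)).re = r * ‖z‖ ^ 2 := by
  simp [Complex.mul_re, Complex.sq_norm, Complex.normSq_apply]

lemma Qf_eq_re_Wf (e : ι → ℝ) (u : ι → ℂ) : Qf e u = (Wf e u u).re := by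
  rw [Wf, Complex.re_sum, Qf]
  exact Finset.sum_congr rfl fun i _ => (re_term (e i) (u i)).symm

lemma Wf_comm (e : ι → ℝ) (u v : ι → ℂ) :
    Wf e v u = starRingEnd ℂ (Wf e u v) := by
  rw [Wf, Wf, map_sum]
  refine Finset.sum_congr rfl fun i _ => ?_
  simp only [_root_.map_mul, Complex.conj_ofReal, Complex.conj_conj]
  ring

lemma key_expand (r : ℝ) (z w : ℂ) (c : ℂ) :
    r * ‖z + c * w‖ ^ 2 =
      r * ‖z‖ ^ 2 + ‖c‖ ^ 2 * (r * ‖w‖ ^ 2)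
        + 2 * (c * ((r : ℂ) * (starRingEnd ℂ z * w))).re := by
  simp [Complex.mul_re, Complex.sq_norm, Complex.normSq_apply,
    Complex.add_re, Complex.add_im, Complex.mul_im]
  ring

lemma Qf_add_smul (e : ι → ℝ) (u v : ι → ℂ) (c : ℂ) :
    Qf e (u + c • v) = Qf e u + ‖c‖ ^ 2 * Qf e v + 2 * (c * Wf e u v).re := by
  have h1 : Qf e (u + c • v)
      = ∑ i, (e i * ‖u i‖ ^ 2 + ‖c‖ ^ 2 * (e i * ‖v i‖ ^ 2)
          + 2 * (c * ((e i : ℂ) * (starRingEnd ℂ (u i) * v i))).re) := by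
    rw [Qf]
    refine Finset.sum_congr rfl fun i _ => ?_
    simpa using key_expand (e i) (u i) (v i) c
  have h2 : (c * Wf e u v).re = ∑ i, (c * ((e i : ℂ) * (starRingEnd ℂ (u i) * v i))).re := by
    rw [Wf, Finset.mul_sum, Complex.re_sum]
  rw [h1, Finset.sum_add_distrib, Finset.sum_add_distrib, ← Finset.mul_sum, ← Finset.mul_sum, h2]
  rfl

lemma dim_bound (e : ι → ℝ) (W : Submodule ℂ (ι → ℂ))
    (hW : ∀ u ∈ W, Qf e u ≤ 0) :
    finrank ℂ W ≤ Fintype.card {i // e i ≤ 0} := by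
  classical
  set π : (ι → ℂ) →ₗ[ℂ] ({i // e i ≤ 0} → ℂ) :=
    LinearMap.funLeft ℂ ℂ (Subtype.val : {i // e i ≤ 0} → ι) with hπ
  have hNmem : ∀ u ∈ (LinearMap.ker π), ∀ i, e i ≤ 0 → u i = 0 := by
    intro u hu i hi
    have := congrFun (LinearMap.mem_ker.mp hu) ⟨i, hi⟩
    simpa [hπ, LinearMap.funLeft] using this
  have hdisj : W ⊓ (LinearMap.ker π) = ⊥ := by
    rw [Submodule.eq_bot_iff]
    intro u hu
    obtain ⟨huW, huN⟩ := Submodule.mem_inf.mp hu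
    have hterm : ∀ i ∈ Finset.univ, (0:ℝ) ≤ e i * ‖u i‖ ^ 2 := by
      intro i _
      by_cases hi : e i ≤ 0
      · simp [hNmem u huN i hi]
      · have : 0 < e i := lt_of_not_ge hi
        positivity
    have hzero := (Finset.sum_eq_zero_iff_of_nonneg hterm).mp
      (le_antisymm (hW u huW) (Finset.sum_nonneg hterm))
    funext i
    by_cases hi : e i ≤ 0
    · exact hNmem u huN i hi
    · have h0 := hzero i (Finset.mem_univ i)
      have he : e i ≠ 0 := fun h => hi (le_of_eq h)
      have : ‖u i‖ ^ 2 = 0 := by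
        rcases mul_eq_zero.mp h0 with h | h
        · exact absurd h he
        · exact h
      simpa using pow_eq_zero_iff (n := 2) (by norm_num) |>.mp this
  have hsurj : Function.Surjective π :=
    LinearMap.funLeft_surjective_of_injective ℂ ℂ _ Subtype.val_injective
  have hrange : LinearMap.range π = ⊤ := LinearMap.range_eq_top.mpr hsurj
  have h1 := LinearMap.finrank_range_add_finrank_ker π
  rw [hrange] at h1
  rw [finrank_top, Module.finrank_pi, Module.finrank_pi] at h1
  have h2 := Submodule.finrank_sup_add_finrank_inf_eq W (LinearMap.ker π)
  rw [hdisj] at h2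
  have h3 : finrank ℂ ↥(W ⊔ (LinearMap.ker π)) ≤ Fintype.card ι := by
    have := Submodule.finrank_le (W ⊔ LinearMap.ker π)
    simpa [Module.finrank_pi] using this
  have h4 : Fintype.card {i // e i ≤ 0} ≤ Fintype.card ι :=
    Fintype.card_subtype_le _
  simp only [finrank_bot] at h2
  omega

end Stmt7Aux

namespace Stmt7Aux

lemma card_nonpos_eq {n : ℕ} (f : Fin n ⊕ Fin n → ℝ) (h0 : ∀ i, f i ≠ 0)
    (hswap : ∀ j, f (Sum.inr j) = - f (Sum.inl j)) :
    Fintype.card {i // f i ≤ 0} = n := by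
  classical
  have hcompl := Fintype.card_subtype_compl (fun i : Fin n ⊕ Fin n => f i ≤ 0)
  have hequiv : Fintype.card {i // f i ≤ 0} = Fintype.card {i // ¬ f i ≤ 0} := by
    apply Fintype.card_congr
    refine Equiv.subtypeEquiv (Equiv.sumComm (Fin n) (Fin n)) ?_
    rintro (j | j)
    · have h1 : f ((Equiv.sumComm (Fin n) (Fin n)) (Sum.inl j)) = - f (Sum.inl j) := by
        simpa using hswap j
      rw [h1]
      constructor
      · intro h hn
        have := lt_of_le_of_ne h (h0 (Sum.inl j))
        linarith
      · intro h
        push_neg at h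
        linarith
    · have h1 : f ((Equiv.sumComm (Fin n) (Fin n)) (Sum.inr j)) = - f (Sum.inr j) := by
        simp only [Equiv.sumComm_apply, Sum.swap_inr]
        rw [hswap j]; ring
      rw [h1]
      constructor
      · intro h hn
        have := lt_of_le_of_ne h (h0 (Sum.inr j))
        linarith
      · intro h
        push_neg at h
        linarith
  have hle : Fintype.card {i // f i ≤ 0} ≤ Fintype.card (Fin n ⊕ Fin n) :=
    Fintype.card_subtype_le _
  simp only [Fintype.card_sum, Fintype.card_fin] at hcompl hle
  omega

end Stmt7Aux

open Stmt7Aux in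
set_option maxHeartbeats 2000000 in
/-- part of Lemma `lem:accum.CB*C-DB*D`: with
`B̃ = diag(B⁻¹, -B⁻¹)` and the Hermitian form `w(u,u) = ⟨B̃u,u⟩` on `ℂ²ⁿ`, the subspace
`H₁ = ker (C D)` is `w`-nonpositive if and only if `C B C* - D B D* ≥ 0`. -/
theorem stmt7 (n : ℕ) (b : Fin n → ℝ) (hb : ∀ j, b j ≠ 0)
    (C D : Matrix (Fin n) (Fin n) ℂ)
    (hrank : (Matrix.fromCols C D).rank = n) :
    (∀ u : (Fin n ⊕ Fin n) → ℂ,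
        C *ᵥ (u ∘ Sum.inl) + D *ᵥ (u ∘ Sum.inr) = 0 →
        (star u ⬝ᵥ ((Matrix.fromBlocks
            (Matrix.diagonal (fun j => (b j : ℂ)))⁻¹ 0 0
            (-(Matrix.diagonal (fun j => (b j : ℂ)))⁻¹)) *ᵥ u)).re ≤ 0)
    ↔ (C * Matrix.diagonal (fun j => (b j : ℂ)) * Cᴴ
     - D * Matrix.diagonal (fun j => (b j : ℂ)) * Dᴴ).PosSemidef := by
  classical
  set c : Fin n → ℂ := fun j => (b j : ℂ) with hcdef
  have hc0 : ∀ j, c j ≠ 0 := by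
    intro j
    simp only [hcdef]
    exact_mod_cast hb j
  set e : Fin n ⊕ Fin n → ℝ := Sum.elim (fun j => (b j)⁻¹) (fun j => -(b j)⁻¹) with hedef
  have he0 : ∀ i, e i ≠ 0 := by
    rintro (j | j) <;> simp [hedef] <;> exact hb j
  -- B̃ is diagonal
  have hdinv : (diagonal c)⁻¹ = diagonal (fun j => (c j)⁻¹) := by
    apply inv_eq_right_inv
    rw [diagonal_mul_diagonal]
    have h : (fun j => c j * (c j)⁻¹) = fun _ => (1 : ℂ) :=
      funext fun j => mul_inv_cancel₀ (hc0 j)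
    rw [h, diagonal_one]
  have hBt : (fromBlocks (diagonal c)⁻¹ (0 : Matrix (Fin n) (Fin n) ℂ) 0 (-(diagonal c)⁻¹))
      = diagonal (fun i => (e i : ℂ)) := by
    rw [hdinv, diagonal_neg, fromBlocks_diagonal]
    refine congrArg Matrix.diagonal (funext fun i => ?_)
    cases i <;> simp [hedef, hcdef]
  have hquad' : ∀ u : (Fin n ⊕ Fin n) → ℂ,
      (star u ⬝ᵥ ((fromBlocks (diagonal c)⁻¹ 0 0 (-(diagonal c)⁻¹)) *ᵥ u)).re = Qf e u := by
    intro u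
    rw [hBt]
    have h : star u ⬝ᵥ (diagonal (fun i => (e i : ℂ)) *ᵥ u) = Wf e u u := by
      rw [Wf, dotProduct]
      refine Finset.sum_congr rfl fun i _ => ?_
      simp only [mulVec_diagonal, Pi.star_apply, Complex.star_def]
      ring
    rw [h, ← Qf_eq_re_Wf]
  set M : Matrix (Fin n) (Fin n) ℂ := C * diagonal c * Cᴴ - D * diagonal c * Dᴴ with hMdef
  set vmap : (Fin n → ℂ) → (Fin n ⊕ Fin n) → ℂ :=
    fun x => Sum.elim (diagonal c *ᵥ (Cᴴ *ᵥ x)) (-(diagonal c *ᵥ (Dᴴ *ᵥ x))) with hvdef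
  have hMv : ∀ x, C *ᵥ ((vmap x) ∘ Sum.inl) + D *ᵥ ((vmap x) ∘ Sum.inr) = M *ᵥ x := by
    intro x
    have h1 : (vmap x) ∘ Sum.inl = diagonal c *ᵥ (Cᴴ *ᵥ x) := rfl
    have h2 : (vmap x) ∘ Sum.inr = -(diagonal c *ᵥ (Dᴴ *ᵥ x)) := rfl
    rw [h1, h2, Matrix.mulVec_neg, Matrix.mulVec_mulVec, Matrix.mulVec_mulVec,
      Matrix.mulVec_mulVec, Matrix.mulVec_mulVec, hMdef, Matrix.sub_mulVec, sub_eq_add_neg]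
  have hWv : ∀ (u : (Fin n ⊕ Fin n) → ℂ) (x : Fin n → ℂ),
      Wf e u (vmap x) = star (C *ᵥ (u ∘ Sum.inl) + D *ᵥ (u ∘ Sum.inr)) ⬝ᵥ x := by
    intro u x
    have hL : Wf e u (vmap x)
        = (∑ j, starRingEnd ℂ (u (Sum.inl j)) * (Cᴴ *ᵥ x) j)
          + ∑ j, starRingEnd ℂ (u (Sum.inr j)) * (Dᴴ *ᵥ x) j := by
      rw [Wf, Fintype.sum_sum_type]
      congr 1
      · refine Finset.sum_congr rfl fun j _ => ?_
        have hbj : ((b j : ℂ)) ≠ 0 := hc0 j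
        simp only [hvdef, hedef, Sum.elim_inl, mulVec_diagonal, Complex.ofReal_inv, hcdef]
        rw [show ((b j : ℂ))⁻¹ * (starRingEnd ℂ (u (Sum.inl j)) * ((b j : ℂ) * (Cᴴ *ᵥ x) j))
            = (((b j : ℂ))⁻¹ * (b j : ℂ)) * (starRingEnd ℂ (u (Sum.inl j)) * (Cᴴ *ᵥ x) j)
            from by ring, inv_mul_cancel₀ hbj, one_mul]
      · refine Finset.sum_congr rfl fun j _ => ?_
        have hbj : ((b j : ℂ)) ≠ 0 := hc0 j
        simp only [hvdef, hedef, Sum.elim_inr, Pi.neg_apply, mulVec_diagonal,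
          Complex.ofReal_neg, Complex.ofReal_inv, hcdef]
        rw [show (-((b j : ℂ))⁻¹) * (starRingEnd ℂ (u (Sum.inr j)) * (-((b j : ℂ) * (Dᴴ *ᵥ x) j)))
            = (((b j : ℂ))⁻¹ * (b j : ℂ)) * (starRingEnd ℂ (u (Sum.inr j)) * (Dᴴ *ᵥ x) j)
            from by ring, inv_mul_cancel₀ hbj, one_mul]
    rw [hL]
    have e1 : (∑ j, starRingEnd ℂ (u (Sum.inl j)) * (Cᴴ *ᵥ x) j)
        = star (C *ᵥ (u ∘ Sum.inl)) ⬝ᵥ x := by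
      have h1 : (∑ j, starRingEnd ℂ (u (Sum.inl j)) * (Cᴴ *ᵥ x) j)
          = star (u ∘ Sum.inl) ⬝ᵥ (Cᴴ *ᵥ x) := by
        rw [dotProduct]
        refine Finset.sum_congr rfl fun j _ => ?_
        simp [Complex.star_def]
      rw [h1, dotProduct_mulVec, ← star_mulVec]
    have e2 : (∑ j, starRingEnd ℂ (u (Sum.inr j)) * (Dᴴ *ᵥ x) j)
        = star (D *ᵥ (u ∘ Sum.inr)) ⬝ᵥ x := by
      have h1 : (∑ j, starRingEnd ℂ (u (Sum.inr j)) * (Dᴴ *ᵥ x) j)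
          = star (u ∘ Sum.inr) ⬝ᵥ (Dᴴ *ᵥ x) := by
        rw [dotProduct]
        refine Finset.sum_congr rfl fun j _ => ?_
        simp [Complex.star_def]
      rw [h1, dotProduct_mulVec, ← star_mulVec]
    rw [e1, e2, ← add_dotProduct, ← star_add]
  have hstar : ∀ (y z : Fin n → ℂ), star y ⬝ᵥ z = starRingEnd ℂ (star z ⬝ᵥ y) := by
    intro y z
    rw [dotProduct, dotProduct, map_sum]
    refine Finset.sum_congr rfl fun i _ => ?_
    simp only [Pi.star_apply, Complex.star_def, _root_.map_mul, Complex.conj_conj]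
    ring
  have hQv : ∀ x, Qf e (vmap x) = (star x ⬝ᵥ (M *ᵥ x)).re := by
    intro x
    rw [Qf_eq_re_Wf, hWv (vmap x) x, hMv x, hstar]
    simp
  set T : ((Fin n ⊕ Fin n) → ℂ) →ₗ[ℂ] (Fin n → ℂ) := (fromCols C D).mulVecLin with hTdef
  have hTapp : ∀ u, T u = C *ᵥ (u ∘ Sum.inl) + D *ᵥ (u ∘ Sum.inr) := by
    intro u
    have hu : u = Sum.elim (u ∘ Sum.inl) (u ∘ Sum.inr) := by funext i; cases i <;> rfl
    rw [hTdef, mulVecLin_apply]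
    conv_lhs => rw [hu]
    exact fromCols_mulVec_sumElim C D _ _
  have hH1rank : finrank ℂ ↥(LinearMap.ker T) = n := by
    have h := LinearMap.finrank_range_add_finrank_ker T
    have hr : finrank ℂ ↥(LinearMap.range T) = n := hrank
    rw [Module.finrank_pi, hr] at h
    simp only [Fintype.card_sum, Fintype.card_fin] at h
    omega
  set L : (Fin n → ℂ) →ₗ[ℂ] ((Fin n ⊕ Fin n) → ℂ) :=
    { toFun := vmap
      map_add' := by
        intro x y
        funext i
        cases i <;> simp [hvdef, Matrix.mulVec_add] <;> ring
      map_smul' := by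
        intro a x
        funext i
        cases i <;> simp [hvdef, Matrix.mulVec_smul] } with hLdef
  have hLapp : ∀ x, L x = vmap x := fun _ => rfl
  have hLinj : LinearMap.ker L = ⊥ := by
    rw [LinearMap.ker_eq_bot']
    intro x hx
    have hx' : vmap x = 0 := hx
    have h1 : ∀ j, (diagonal c *ᵥ (Cᴴ *ᵥ x)) j = 0 := fun j => congrFun hx' (Sum.inl j)
    have h2 : ∀ j, (-(diagonal c *ᵥ (Dᴴ *ᵥ x))) j = 0 := fun j => congrFun hx' (Sum.inr j)
    have hC : Cᴴ *ᵥ x = 0 := by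
      funext j
      have := h1 j
      rw [mulVec_diagonal] at this
      exact (mul_eq_zero.mp this).resolve_left (hc0 j)
    have hD : Dᴴ *ᵥ x = 0 := by
      funext j
      have := h2 j
      rw [Pi.neg_apply, neg_eq_zero, mulVec_diagonal] at this
      exact (mul_eq_zero.mp this).resolve_left (hc0 j)
    have hA : (fromCols C D)ᴴ *ᵥ x = 0 := by
      rw [conjTranspose_fromCols_eq_fromRows_conjTranspose, fromRows_mulVec, hC, hD]
      funext i
      cases i <;> rfl
    have hrk : finrank ℂ ↥(LinearMap.range ((fromCols C D)ᴴ).mulVecLin) = n := by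
      have : ((fromCols C D)ᴴ).rank = n := by rw [rank_conjTranspose]; exact hrank
      exact this
    have h := LinearMap.finrank_range_add_finrank_ker ((fromCols C D)ᴴ).mulVecLin
    rw [Module.finrank_pi, hrk, Fintype.card_fin] at h
    have hker0 : finrank ℂ ↥(LinearMap.ker ((fromCols C D)ᴴ).mulVecLin) = 0 := by omega
    have hkerbot : LinearMap.ker ((fromCols C D)ᴴ).mulVecLin = ⊥ :=
      Submodule.finrank_eq_zero.mp hker0
    have hx0 : x ∈ LinearMap.ker ((fromCols C D)ᴴ).mulVecLin := by
      rw [LinearMap.mem_ker, mulVecLin_apply]; exact hA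
    rw [hkerbot] at hx0
    exact hx0
  have hH2rank : finrank ℂ ↥(LinearMap.range L) = n := by
    have h := LinearMap.finrank_range_add_finrank_ker L
    rw [hLinj, finrank_bot, Module.finrank_pi, Fintype.card_fin] at h
    omega
  have hcard1 : Fintype.card {i // e i ≤ 0} = n := by
    apply card_nonpos_eq e he0
    intro j
    simp [hedef]
  have hcard2 : Fintype.card {i // (fun i => -(e i)) i ≤ 0} = n := by
    apply card_nonpos_eq _ (fun i => neg_ne_zero.mpr (he0 i))
    intro j
    simp [hedef]
  constructor
  · -- nonpositivity on H₁ implies PosSemidef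
    intro hH1
    have hH1' : ∀ u : (Fin n ⊕ Fin n) → ℂ,
        C *ᵥ (u ∘ Sum.inl) + D *ᵥ (u ∘ Sum.inr) = 0 → Qf e u ≤ 0 := by
      intro u hu
      rw [← hquad' u]
      exact hH1 u hu
    have hdc : (diagonal c)ᴴ = diagonal c := by
      rw [diagonal_conjTranspose]
      refine congrArg Matrix.diagonal (funext fun j => ?_)
      simp [hcdef, Complex.star_def, Complex.conj_ofReal]
    have hherm : M.IsHermitian := by
      show Mᴴ = M
      rw [hMdef]
      simp [conjTranspose_sub, conjTranspose_mul, hdc, conjTranspose_conjTranspose,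
        Matrix.mul_assoc]
    refine PosSemidef.of_dotProduct_mulVec_nonneg hherm ?_
    intro x
    have hret : 0 ≤ (star x ⬝ᵥ M *ᵥ x).re := by
      by_contra hneg
      push_neg at hneg
      have hQvx : Qf e (vmap x) < 0 := by rw [hQv]; exact hneg
      by_cases hmem : vmap x ∈ LinearMap.ker T
      · have hMx : M *ᵥ x = 0 := by
          rw [← hMv x]
          have := LinearMap.mem_ker.mp hmem
          rw [hTapp] at this
          exact this
        have hz : Qf e (vmap x) = 0 := by
          rw [Qf_eq_re_Wf, hWv, hMv, hMx]
          simp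
        linarith
      · set W' := LinearMap.ker T ⊔ Submodule.span ℂ {vmap x} with hW'def
        have hnp : ∀ w ∈ W', Qf e w ≤ 0 := by
          intro w hw
          obtain ⟨u1, hu1, s, hs, rfl⟩ := Submodule.mem_sup.mp hw
          obtain ⟨a, rfl⟩ := Submodule.mem_span_singleton.mp hs
          rw [Qf_add_smul]
          have hu1' : C *ᵥ (u1 ∘ Sum.inl) + D *ᵥ (u1 ∘ Sum.inr) = 0 := by
            rw [← hTapp]
            exact LinearMap.mem_ker.mp hu1
          have hW0 : Wf e u1 (vmap x) = 0 := by
            rw [hWv, hu1']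
            simp
          rw [hW0]
          simp only [mul_zero, Complex.zero_re, add_zero]
          have := hH1' u1 hu1'
          nlinarith [sq_nonneg ‖a‖, norm_nonneg a]
        have hdim := dim_bound e W' hnp
        rw [hcard1] at hdim
        have hlt : LinearMap.ker T < W' := by
          refine lt_of_le_of_ne le_sup_left ?_
          intro hEq
          apply hmem
          rw [hEq]
          exact Submodule.mem_sup_right (Submodule.mem_span_singleton_self _)
        have hsl := Submodule.finrank_lt_finrank_of_lt hlt
        rw [hH1rank] at hsl
        omega
    have hconj : starRingEnd ℂ (star x ⬝ᵥ M *ᵥ x) = star x ⬝ᵥ M *ᵥ x := by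
      rw [← hstar (M *ᵥ x) x, star_mulVec, ← dotProduct_mulVec, hherm.eq]
    have him : (star x ⬝ᵥ M *ᵥ x).im = 0 := by
      have := congrArg Complex.im hconj
      simp only [Complex.conj_im] at this
      linarith
    rw [Complex.le_def]
    constructor
    · simpa using hret
    · simp [him]
  · -- PosSemidef implies nonpositivity on H₁
    intro hPSD u hu
    rw [hquad' u]
    by_contra hpos
    push_neg at hpos
    have humem : u ∉ LinearMap.range L := by
      rintro ⟨x, rfl⟩
      have hz : Qf e (vmap x) = 0 := by
        rw [Qf_eq_re_Wf, hWv]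
        have hu' : C *ᵥ ((vmap x) ∘ Sum.inl) + D *ᵥ ((vmap x) ∘ Sum.inr) = 0 := hu
        rw [hu']
        simp
      rw [hLapp] at hpos
      linarith
    set W' := LinearMap.range L ⊔ Submodule.span ℂ {u} with hW'def
    have hnn : ∀ w ∈ W', Qf (fun i => -(e i)) w ≤ 0 := by
      intro w hw
      obtain ⟨w1, hw1, s, hs, rfl⟩ := Submodule.mem_sup.mp hw
      obtain ⟨x, rfl⟩ := hw1
      obtain ⟨a, rfl⟩ := Submodule.mem_span_singleton.mp hs
      have hQneg : ∀ z, Qf (fun i => -(e i)) z = - Qf e z := by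
        intro z
        rw [Qf, Qf, ← Finset.sum_neg_distrib]
        exact Finset.sum_congr rfl fun i _ => by ring
      rw [hQneg, neg_nonpos]
      rw [hLapp, Qf_add_smul]
      have hcross : Wf e (vmap x) u = 0 := by
        rw [Wf_comm, hWv, hu]
        simp
      rw [hcross]
      simp only [mul_zero, Complex.zero_re, add_zero]
      have h1 : 0 ≤ Qf e (vmap x) := by
        rw [hQv]
        have := hPSD.dotProduct_mulVec_nonneg x
        rw [Complex.le_def] at this
        simpa using this.1
      nlinarith [sq_nonneg ‖a‖, norm_nonneg a]
    have hdim := dim_bound (fun i => -(e i)) W' hnn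
    rw [hcard2] at hdim
    have hlt : LinearMap.range L < W' := by
      refine lt_of_le_of_ne le_sup_left ?_
      intro hEq
      apply humem
      rw [hEq]
      exact Submodule.mem_sup_right (Submodule.mem_span_singleton_self _)
    have hsl := Submodule.finrank_lt_finrank_of_lt hlt
    rw [hH2rank] at hsl
    omega
end

section
/- For every a ∈ ℂ, the system of functions {e^{aπnx} sin(πnx)}_{n ∈ ℤ\{0\}} together with {πn·e^{(a-i)πnx}}_{n ∈ ℤ\{0\}}, arranged as the ℂ²-valued functions v_n(x) = (e^{aπnx} sin(πnx), πn·e^{(a-i)πnx}) for n ∈ ℤ\{0\}, consists of eigenfunctions of the boundary value problem y₁' = e^{iθ}λy₁ + y₂, y₂' = e^{-iθ}λy₂ on [0,1] with boundary conditions y₁(0) = y₁(1) = 0, where a = cot θ; the eigenvalue corresponding to v_n is λ_n = πn/sin θ, and the spectrum of this problem is exactly {πn/sin θ : n ∈ ℤ\{0\}} with each eigenvalue simple. -/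
open Complex


/-- First component `e^{aπnx}·sin(πnx)` of the eigenfunction `v_n`. -/
noncomputable def stmt12v1 (a : ℂ) (n : ℤ) (x : ℝ) : ℂ :=
  Complex.exp (a * (Real.pi * n) * x) * Complex.sin (Real.pi * n * x)

/-- Second component `πn·e^{(a-i)πnx}` of the eigenfunction `v_n`. -/
noncomputable def stmt12v2 (a : ℂ) (n : ℤ) (x : ℝ) : ℂ :=
  (Real.pi * n : ℂ) * Complex.exp ((a - Complex.I) * (Real.pi * n) * x)

/-- `(y₁,y₂)` solves the system `y₁' = e^{iθ}λy₁ + y₂`, `y₂' = e^{-iθ}λy₂` on `[0,1]`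
with boundary conditions `y₁(0) = y₁(1) = 0`. -/
def stmt12IsSol (θ lam : ℂ) (y₁ y₂ : ℝ → ℂ) : Prop :=
  (∀ x : ℝ, HasDerivAt y₁ (Complex.exp (Complex.I * θ) * lam * y₁ x + y₂ x) x) ∧
  (∀ x : ℝ, HasDerivAt y₂ (Complex.exp (-Complex.I * θ) * lam * y₂ x) x) ∧
  y₁ 0 = 0 ∧ y₁ 1 = 0


/-- derivative of `t ↦ exp (c t)` over ℝ. -/
lemma hd_cexp (c : ℂ) (x : ℝ) :
    HasDerivAt (fun t : ℝ => Complex.exp (c * t)) (c * Complex.exp (c * x)) x := by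
  have h : HasDerivAt (fun z : ℂ => Complex.exp (c * z)) (Complex.exp (c * x) * c) (x : ℂ) :=
    (Complex.hasDerivAt_exp _).comp _ (by simpa using (hasDerivAt_id ((x : ℂ))).const_mul c)
  simpa [mul_comm] using h.comp_ofReal

lemma hd_xcexp (c : ℂ) (x : ℝ) :
    HasDerivAt (fun t : ℝ => (t : ℂ) * Complex.exp (c * t))
      (Complex.exp (c * x) + c * x * Complex.exp (c * x)) x := by
  have h1 : HasDerivAt (fun t : ℝ => (t : ℂ)) 1 x := by
    simpa using (hasDerivAt_id x).ofReal_comp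
  have := h1.mul (hd_cexp c x)
  exact this.congr_deriv (Eq.symm (by ring))

lemma ode_hom (μ : ℂ) (f : ℝ → ℂ) (h : ∀ x : ℝ, HasDerivAt f (μ * f x) x) (x : ℝ) :
    f x = f 0 * Complex.exp (μ * x) := by
  have hg : ∀ t : ℝ, HasDerivAt (fun t => f t * Complex.exp (-μ * t)) 0 t := by
    intro t
    have := (h t).mul (hd_cexp (-μ) t)
    exact this.congr_deriv (Eq.symm (by ring))
  have hc : f x * Complex.exp (-μ * x) = f 0 * Complex.exp (-μ * 0) :=
    is_const_of_deriv_eq_zero (fun t => (hg t).differentiableAt)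
      (fun t => (hg t).deriv) x 0
  have h2 : f x = f x * Complex.exp (-μ * x) * Complex.exp (μ * x) := by
    rw [mul_assoc, ← Complex.exp_add]; ring_nf; simp
  rw [h2, hc]
  simp

lemma ode_inhom (μ : ℂ) (g y p : ℝ → ℂ)
    (hy : ∀ x : ℝ, HasDerivAt y (μ * y x + g x) x)
    (hp : ∀ x : ℝ, HasDerivAt p (μ * p x + g x) x) (x : ℝ) :
    y x = (y 0 - p 0) * Complex.exp (μ * x) + p x := by
  have h : ∀ t : ℝ, HasDerivAt (fun t => y t - p t) (μ * (y t - p t)) t := by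
    intro t
    have := (hy t).sub (hp t)
    exact this.congr_deriv (Eq.symm (by ring))
  have := ode_hom μ (fun t => y t - p t) h x
  linear_combination this

lemma sin_formula (z : ℂ) :
    Complex.sin z = (Complex.exp (z * I) - Complex.exp (-z * I)) / (2 * I) := by
  have h1 := Complex.exp_mul_I z
  have h2 := Complex.exp_mul_I (-z)
  rw [Complex.sin_neg, Complex.cos_neg] at h2
  rw [h1, h2]
  field_simp [Complex.I_ne_zero]
  ring

/-- structure of any solution of the system, given `B` with `y₂ 0 = B(μ - ν)`. -/
lemma sol_structure (F E lam : ℂ) (y₁ y₂ : ℝ → ℂ)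
    (h1 : ∀ x : ℝ, HasDerivAt y₁ (F * lam * y₁ x + y₂ x) x)
    (h2 : ∀ x : ℝ, HasDerivAt y₂ (E * lam * y₂ x) x)
    (B : ℂ) (hB : y₂ 0 = B * (E * lam - F * lam)) (x : ℝ) :
    y₂ x = y₂ 0 * Complex.exp (E * lam * x) ∧
      y₁ x = (y₁ 0 - B) * Complex.exp (F * lam * x) + B * Complex.exp (E * lam * x) := by
  have hy2 : ∀ x : ℝ, y₂ x = y₂ 0 * Complex.exp (E * lam * x) := ode_hom (E * lam) y₂ h2
  have hp : ∀ x : ℝ, HasDerivAt (fun t : ℝ => B * Complex.exp (E * lam * t))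
      (F * lam * (B * Complex.exp (E * lam * x)) + y₂ x) x := by
    intro x
    have := (hd_cexp (E * lam) x).const_mul B
    refine this.congr_deriv (Eq.symm ?_)
    rw [hy2 x]
    linear_combination Complex.exp (E * lam * x) * hB
  have hy1 := ode_inhom (F * lam) y₂ y₁ (fun t : ℝ => B * Complex.exp (E * lam * t)) h1 hp x
  refine ⟨hy2 x, ?_⟩
  simpa using hy1

/-- explicit exponential form of `stmt12v1`. -/
lemma v1_eq (a : ℂ) (n : ℤ) (x : ℝ) :
    stmt12v1 a n x =
      (Complex.exp ((a + I) * (Real.pi * n) * x) - Complex.exp ((a - I) * (Real.pi * n) * x))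
        / (2 * I) := by
  unfold stmt12v1
  rw [sin_formula]
  rw [show (a + I) * ((Real.pi : ℂ) * n) * x
      = a * ((Real.pi : ℂ) * n) * x + ((Real.pi : ℂ) * n * x) * I by ring,
    show (a - I) * ((Real.pi : ℂ) * n) * x
      = a * ((Real.pi : ℂ) * n) * x + (-((Real.pi : ℂ) * n * x)) * I by ring,
    Complex.exp_add, Complex.exp_add]
  ring


lemma v1_hasDeriv (a : ℂ) (n : ℤ) (x : ℝ) :
    HasDerivAt (stmt12v1 a n)
      (((a + I) * ((Real.pi : ℂ) * n) * Complex.exp ((a + I) * ((Real.pi : ℂ) * n) * x)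
        - (a - I) * ((Real.pi : ℂ) * n) * Complex.exp ((a - I) * ((Real.pi : ℂ) * n) * x))
        / (2 * I)) x := by
  have hfe : stmt12v1 a n = fun t : ℝ =>
      (Complex.exp ((a + I) * ((Real.pi : ℂ) * n) * t)
        - Complex.exp ((a - I) * ((Real.pi : ℂ) * n) * t)) / (2 * I) :=
    funext (v1_eq a n)
  rw [hfe]
  exact ((hd_cexp _ x).sub (hd_cexp _ x)).div_const _

lemma v2_hasDeriv (a : ℂ) (n : ℤ) (x : ℝ) :
    HasDerivAt (stmt12v2 a n)
      ((a - I) * ((Real.pi : ℂ) * n) * stmt12v2 a n x) x := by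
  have h := (hd_cexp ((a - I) * ((Real.pi : ℂ) * n)) x).const_mul ((Real.pi : ℂ) * n)
  unfold stmt12v2
  exact h.congr_deriv (Eq.symm (by ring))

/-- proof of Corollary `cor:levin`: with `a = cot θ`, the vector
functions `v_n = (e^{aπnx}sin(πnx), πn·e^{(a-i)πnx})`, `n ∈ ℤ\{0}`, are eigenfunctions of
the boundary value problem `y₁' = e^{iθ}λy₁ + y₂`, `y₂' = e^{-iθ}λy₂`, `y₁(0)=y₁(1)=0`
with eigenvalue `λ_n = πn/sin θ`; the spectrum is exactly `{πn/sinθ : n ≠ 0}`, and each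
eigenvalue is simple (every eigenfunction is a multiple of `v_n`, and there is no
associated function). -/
theorem stmt12 (a θ : ℂ) (hθ : ∀ k : ℤ, θ ≠ k * Real.pi)
    (ha : a = Complex.cos θ / Complex.sin θ) :
    -- v_n is a (nonzero) eigenfunction with eigenvalue πn/sinθ
    (∀ n : ℤ, n ≠ 0 →
      stmt12IsSol θ (Real.pi * n / Complex.sin θ) (stmt12v1 a n) (stmt12v2 a n) ∧
      ¬(stmt12v1 a n = 0 ∧ stmt12v2 a n = 0))
    ∧
    -- the spectrum is exactly {πn/sinθ : n ∈ ℤ\{0}}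
    (∀ lam : ℂ,
      (∃ y₁ y₂ : ℝ → ℂ, stmt12IsSol θ lam y₁ y₂ ∧ ¬(y₁ = 0 ∧ y₂ = 0))
        ↔ ∃ n : ℤ, n ≠ 0 ∧ lam = Real.pi * n / Complex.sin θ)
    ∧
    -- geometric simplicity: every eigenfunction is a multiple of v_n
    (∀ n : ℤ, n ≠ 0 → ∀ y₁ y₂ : ℝ → ℂ,
      stmt12IsSol θ (Real.pi * n / Complex.sin θ) y₁ y₂ →
      ∃ c : ℂ, (y₁ = fun x => c * stmt12v1 a n x) ∧ (y₂ = fun x => c * stmt12v2 a n x))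
    ∧
    -- algebraic simplicity: there is no associated function to v_n
    (∀ n : ℤ, n ≠ 0 →
      ¬ ∃ u₁ u₂ : ℝ → ℂ,
        (∀ x : ℝ, HasDerivAt u₁
          (Complex.exp (Complex.I * θ) * (Real.pi * n / Complex.sin θ) * u₁ x + u₂ x
            + Complex.exp (Complex.I * θ) * stmt12v1 a n x) x) ∧
        (∀ x : ℝ, HasDerivAt u₂
          (Complex.exp (-Complex.I * θ) * (Real.pi * n / Complex.sin θ) * u₂ x
            + Complex.exp (-Complex.I * θ) * stmt12v2 a n x) x) ∧
        u₁ 0 = 0 ∧ u₁ 1 = 0) := by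
  -- basic facts
  have hs : Complex.sin θ ≠ 0 := by
    intro h
    obtain ⟨k, hk⟩ := Complex.sin_eq_zero_iff.1 h
    exact hθ k hk
  have hcos : a * Complex.sin θ = Complex.cos θ := by
    rw [ha]; field_simp
  have hF : Complex.exp (Complex.I * θ) = (a + I) * Complex.sin θ := by
    rw [mul_comm Complex.I θ, Complex.exp_mul_I, ← hcos]; ring
  have hE : Complex.exp (-Complex.I * θ) = (a - I) * Complex.sin θ := by
    rw [show -Complex.I * θ = (-θ) * I by ring, Complex.exp_mul_I,
      Complex.sin_neg, Complex.cos_neg, ← hcos]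
    ring
  have hFE : Complex.exp (Complex.I * θ) - Complex.exp (-Complex.I * θ)
      = 2 * I * Complex.sin θ := by
    rw [hF, hE]; ring
  -- facts depending on n
  have hNne : ∀ n : ℤ, n ≠ 0 → ((Real.pi : ℂ) * n) ≠ 0 := by
    intro n hn
    exact mul_ne_zero (by exact_mod_cast Complex.ofReal_ne_zero.2 Real.pi_ne_zero)
      (Int.cast_ne_zero.2 hn)
  have hν : ∀ n : ℤ, Complex.exp (Complex.I * θ) * ((Real.pi : ℂ) * n / Complex.sin θ)
      = (a + I) * ((Real.pi : ℂ) * n) := by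
    intro n; rw [hF]; field_simp
  have hμ : ∀ n : ℤ, Complex.exp (-Complex.I * θ) * ((Real.pi : ℂ) * n / Complex.sin θ)
      = (a - I) * ((Real.pi : ℂ) * n) := by
    intro n; rw [hE]; field_simp
  have key1 : ∀ n : ℤ, n ≠ 0 →
      stmt12IsSol θ (Real.pi * n / Complex.sin θ) (stmt12v1 a n) (stmt12v2 a n) ∧
      ¬(stmt12v1 a n = 0 ∧ stmt12v2 a n = 0) := by
    intro n hn
    constructor
    · refine ⟨?_, ?_, ?_, ?_⟩
      · intro x
        have h := v1_hasDeriv a n x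
        convert h using 1
        rw [v1_eq a n x, hν n]
        simp only [stmt12v2]
        field_simp
        ring
      · intro x
        have h := v2_hasDeriv a n x
        rw [← hμ n] at h
        exact h
      · simp [stmt12v1]
      · have hsin : Complex.sin ((Real.pi : ℂ) * n) = 0 := by
          rw [mul_comm]
          exact Complex.sin_int_mul_pi n
        simp [stmt12v1, hsin]
    · rintro ⟨h1, h2⟩
      have := congrFun h2 0
      simp [stmt12v2] at this
      exact hn this
  refine ⟨key1, ?_, ?_, ?_⟩
  · -- spectrum
    intro lam
    constructor
    · rintro ⟨y₁, y₂, ⟨hd1, hd2, hb0, hb1⟩, hnt⟩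
      by_cases h0 : lam = 0
      · exfalso
        subst h0
        have hy2 : ∀ x : ℝ, y₂ x = y₂ 0 := by
          intro x
          have := ode_hom (Complex.exp (-Complex.I * θ) * 0) y₂ hd2 x
          simpa using this
        have hp : ∀ x : ℝ, HasDerivAt (fun t : ℝ => y₂ 0 * (t : ℂ))
            (Complex.exp (Complex.I * θ) * 0 * (y₂ 0 * (x : ℂ)) + y₂ x) x := by
          intro x
          have h1 : HasDerivAt (fun t : ℝ => (t : ℂ)) 1 x := by
            simpa using (hasDerivAt_id x).ofReal_comp
          have := h1.const_mul (y₂ 0)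
          refine this.congr_deriv (Eq.symm ?_)
          rw [hy2 x]; ring
        have hy1 := ode_inhom (Complex.exp (Complex.I * θ) * 0) y₂ y₁
          (fun t : ℝ => y₂ 0 * (t : ℂ)) hd1 hp
        have h1 := hy1 1
        rw [hb0, hb1] at h1
        have hC : y₂ 0 = 0 := by simpa using h1.symm
        apply hnt
        constructor <;> funext x
        · have := hy1 x
          rw [hb0] at this
          simpa [hC] using this
        · simpa [hC] using hy2 x
      · set F := Complex.exp (Complex.I * θ) with hFdef
        set E := Complex.exp (-Complex.I * θ) with hEdef
        have hEF : E * lam - F * lam = -(2 * I * Complex.sin θ * lam) := by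
          linear_combination (-lam) * hFE
        have hEFne : E * lam - F * lam ≠ 0 := by
          rw [hEF]
          exact neg_ne_zero.2 (mul_ne_zero (mul_ne_zero (mul_ne_zero two_ne_zero
            Complex.I_ne_zero) hs) h0)
        obtain ⟨B, hB⟩ : ∃ B : ℂ, y₂ 0 = B * (E * lam - F * lam) :=
          ⟨y₂ 0 / (E * lam - F * lam), (div_mul_cancel₀ _ hEFne).symm⟩
        have hst := sol_structure F E lam y₁ y₂ hd1 hd2 B hB
        have h1 := (hst 1).2
        rw [hb0, hb1] at h1
        by_cases hB0 : B = 0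
        · exfalso
          apply hnt
          have hC : y₂ 0 = 0 := by rw [hB, hB0]; ring
          constructor <;> funext x
          · have := (hst x).2
            rw [hb0, hB0] at this
            simpa using this
          · have := (hst x).1
            rw [hC] at this
            simpa using this
        · have hexp : Complex.exp (E * lam * (1 : ℝ)) = Complex.exp (F * lam * (1 : ℝ)) := by
            have hz : B * (Complex.exp (E * lam * (1 : ℝ))
                - Complex.exp (F * lam * (1 : ℝ))) = 0 := by
              linear_combination -h1
            rcases mul_eq_zero.1 hz with h | h
            · exact absurd h hB0
            · exact sub_eq_zero.1 h
          simp only [Complex.ofReal_one, mul_one] at hexp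
          have hone : Complex.exp (F * lam - E * lam) = 1 := by
            rw [Complex.exp_sub, ← hexp, div_self (Complex.exp_ne_zero _)]
          obtain ⟨k, hk⟩ := Complex.exp_eq_one_iff.1 hone
          have h2 : 2 * I * Complex.sin θ * lam = k * (2 * Real.pi * I) := by
            linear_combination hk - lam * hFE
          refine ⟨k, ?_, ?_⟩
          · rintro rfl
            simp [Complex.I_ne_zero, hs] at h2
            exact h0 h2
          · field_simp
            linear_combination (-I / 2) * h2
              + (lam * Complex.sin θ - (Real.pi : ℂ) * k) * Complex.I_sq
    · rintro ⟨n, hn, rfl⟩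
      exact ⟨stmt12v1 a n, stmt12v2 a n, (key1 n hn).1, (key1 n hn).2⟩
  · -- geometric simplicity
    rintro n hn y₁ y₂ ⟨hd1, hd2, hb0, hb1⟩
    set F := Complex.exp (Complex.I * θ) with hFdef
    set E := Complex.exp (-Complex.I * θ) with hEdef
    have hEF2 : E * ((Real.pi : ℂ) * n / Complex.sin θ)
        - F * ((Real.pi : ℂ) * n / Complex.sin θ) = -(2 * I * ((Real.pi : ℂ) * n)) := by
      rw [hμ n, hν n]; ring
    have hEFne : E * ((Real.pi : ℂ) * n / Complex.sin θ)
        - F * ((Real.pi : ℂ) * n / Complex.sin θ) ≠ 0 := by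
      rw [hEF2]
      exact neg_ne_zero.2 (mul_ne_zero (mul_ne_zero two_ne_zero Complex.I_ne_zero)
        (hNne n hn))
    obtain ⟨B, hB⟩ : ∃ B : ℂ, y₂ 0 = B * (E * ((Real.pi : ℂ) * n / Complex.sin θ)
        - F * ((Real.pi : ℂ) * n / Complex.sin θ)) :=
      ⟨y₂ 0 / _, (div_mul_cancel₀ _ hEFne).symm⟩
    have hst := sol_structure F E ((Real.pi : ℂ) * n / Complex.sin θ) y₁ y₂ hd1 hd2 B hB
    have hCB : y₂ 0 = B * (-(2 * I * ((Real.pi : ℂ) * n))) := by rw [hB, hEF2]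
    refine ⟨y₂ 0 / ((Real.pi : ℂ) * n), ?_, ?_⟩ <;> funext x
    · have h := (hst x).2
      rw [hb0] at h
      rw [h, v1_eq a n x]
      rw [hν n, hμ n, hCB]
      have hpi : ((Real.pi : ℝ) : ℂ) ≠ 0 := Complex.ofReal_ne_zero.2 Real.pi_ne_zero
      have hnc : ((n : ℤ) : ℂ) ≠ 0 := Int.cast_ne_zero.2 hn
      field_simp [Complex.I_ne_zero, hpi, hnc]
      ring
    · have h := (hst x).1
      rw [h, hμ n]
      simp only [stmt12v2]
      field_simp [hNne n hn]
  · -- algebraic simplicity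
    rintro n hn ⟨u₁, u₂, hd1, hd2, hb0, hb1⟩
    set F := Complex.exp (Complex.I * θ) with hFdef
    set E := Complex.exp (-Complex.I * θ) with hEdef
    simp only [hν n, hμ n, stmt12v2] at hd1 hd2
    have hpi : ((Real.pi : ℝ) : ℂ) ≠ 0 := Complex.ofReal_ne_zero.2 Real.pi_ne_zero
    have hnc : ((n : ℤ) : ℂ) ≠ 0 := Int.cast_ne_zero.2 hn
    have h2I : (2 : ℂ) * I ≠ 0 := mul_ne_zero two_ne_zero Complex.I_ne_zero
    obtain ⟨δ, hδ⟩ : ∃ δ : ℂ, 2 * I * δ = 1 := ⟨(2 * I)⁻¹, mul_inv_cancel₀ h2I⟩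
    have hδ' : ((2 : ℂ) * I)⁻¹ = δ := inv_eq_of_mul_eq_one_right hδ
    have hv1δ : ∀ x : ℝ, stmt12v1 a n x =
        (Complex.exp ((a + I) * ((Real.pi : ℂ) * n) * x)
          - Complex.exp ((a - I) * ((Real.pi : ℂ) * n) * x)) * δ := by
      intro x
      rw [v1_eq a n x, div_eq_mul_inv, hδ']
    -- solve for u₂
    have hp₂ : ∀ x : ℝ, HasDerivAt
        (fun t : ℝ => E * ((Real.pi : ℂ) * n) * ((t : ℂ)
          * Complex.exp ((a - I) * ((Real.pi : ℂ) * n) * t)))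
        ((a - I) * ((Real.pi : ℂ) * n) * (E * ((Real.pi : ℂ) * n) * ((x : ℂ)
            * Complex.exp ((a - I) * ((Real.pi : ℂ) * n) * x)))
          + E * ((Real.pi : ℂ) * n
            * Complex.exp ((a - I) * ((Real.pi : ℂ) * n) * x))) x := by
      intro x
      have := (hd_xcexp ((a - I) * ((Real.pi : ℂ) * n)) x).const_mul
        (E * ((Real.pi : ℂ) * n))
      exact this.congr_deriv (Eq.symm (by ring))
    have hu₂ := ode_inhom ((a - I) * ((Real.pi : ℂ) * n))
      (fun t : ℝ => E * ((Real.pi : ℂ) * n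
        * Complex.exp ((a - I) * ((Real.pi : ℂ) * n) * t))) u₂
      (fun t : ℝ => E * ((Real.pi : ℂ) * n) * ((t : ℂ)
        * Complex.exp ((a - I) * ((Real.pi : ℂ) * n) * t))) hd2 hp₂
    have hu₂x : ∀ x : ℝ, u₂ x = u₂ 0 * Complex.exp ((a - I) * ((Real.pi : ℂ) * n) * x)
        + E * ((Real.pi : ℂ) * n) * ((x : ℂ)
          * Complex.exp ((a - I) * ((Real.pi : ℂ) * n) * x)) := by
      intro x
      have := hu₂ x
      simpa using this
    -- solve for u₁
    obtain ⟨α, hα⟩ : ∃ α : ℂ, 2 * I * α = -E :=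
      ⟨-E / (2 * I), by field_simp⟩
    obtain ⟨β, hβ⟩ : ∃ β : ℂ,
        α + (-(2 * I * ((Real.pi : ℂ) * n))) * β = u₂ 0 - F * δ :=
      ⟨(u₂ 0 - F * δ - α) / (-(2 * I * ((Real.pi : ℂ) * n))), by
        field_simp
        ring⟩
    set p₁ : ℝ → ℂ := fun t : ℝ => F * δ * ((t : ℂ)
        * Complex.exp ((a + I) * ((Real.pi : ℂ) * n) * t))
      + (α * t + β) * Complex.exp ((a - I) * ((Real.pi : ℂ) * n) * t) with hp₁def
    have hd1' : ∀ x : ℝ, HasDerivAt u₁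
        ((a + I) * ((Real.pi : ℂ) * n) * u₁ x + (u₂ x + F * stmt12v1 a n x)) x := by
      intro x
      have := hd1 x
      convert this using 1
      ring
    have hp₁ : ∀ x : ℝ, HasDerivAt p₁
        ((a + I) * ((Real.pi : ℂ) * n) * p₁ x + (u₂ x + F * stmt12v1 a n x)) x := by
      intro x
      have d1 := (hd_xcexp ((a + I) * ((Real.pi : ℂ) * n)) x).const_mul (F * δ)
      have hlin : HasDerivAt (fun t : ℝ => α * (t : ℂ) + β) α x := by
        simpa using (((hasDerivAt_id x).ofReal_comp).const_mul α).add_const β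
      have d2 := hlin.mul (hd_cexp ((a - I) * ((Real.pi : ℂ) * n)) x)
      have hd := d1.add d2
      rw [hp₁def]
      refine hd.congr_deriv (Eq.symm ?_)
      rw [hv1δ x, hu₂x x]
      linear_combination ((Real.pi : ℂ) * n * (x : ℂ)
          * Complex.exp ((a - I) * ((Real.pi : ℂ) * n) * x)) * hα
        - Complex.exp ((a - I) * ((Real.pi : ℂ) * n) * x) * hβ
    have hu₁ := ode_inhom ((a + I) * ((Real.pi : ℂ) * n))
      (fun t : ℝ => u₂ t + F * stmt12v1 a n t) u₁ p₁ hd1' hp₁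
    have hp₁0 : p₁ 0 = β := by
      rw [hp₁def]; simp
    have h1 := hu₁ 1
    rw [hb0, hb1, hp₁0, hp₁def] at h1
    have hE12 : Complex.exp ((a + I) * ((Real.pi : ℂ) * n) * ((1 : ℝ) : ℂ))
        = Complex.exp ((a - I) * ((Real.pi : ℂ) * n) * ((1 : ℝ) : ℂ)) := by
      have harg : (a + I) * ((Real.pi : ℂ) * n) * ((1 : ℝ) : ℂ)
          = (a - I) * ((Real.pi : ℂ) * n) * ((1 : ℝ) : ℂ) + (n : ℂ) * (2 * Real.pi * I) := by
        push_cast; ring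
      rw [harg, Complex.exp_add, Complex.exp_int_mul_two_pi_mul_I, mul_one]
    simp only [Complex.ofReal_one, mul_one] at h1 hE12
    rw [hE12] at h1
    have hz : (F * δ + α)
        * Complex.exp ((a - I) * ((Real.pi : ℂ) * n)) = 0 := by
      linear_combination -h1
    have hz2 : F * δ + α = 0 := by
      rcases mul_eq_zero.1 hz with h | h
      · exact h
      · exact absurd h (Complex.exp_ne_zero _)
    have hFEeq : F = E := by
      linear_combination (2 * I) * hz2 - F * hδ - hα
    have hzero : (2 : ℂ) * I * Complex.sin θ = 0 := by
      rw [← hFE, hFEeq]; ring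
    rcases mul_eq_zero.1 hzero with h | h
    · exact h2I h
    · exact hs h
end

section
/- Let L = L_{C,D}(Q) be the operator -iB^{-1}y' + Q(x)y on L²([0,1];ℂⁿ) with boundary condition Cy(0) + Dy(1) = 0, where the first row of the boundary conditions is y₁(0) = 0 (i.e., c₁₁ = 1, c₁ₖ = 0 for k ≥ 2, d₁ₖ = 0 for all k). Suppose q_{1j}(x) = 0 for x ∈ [0,ε] and all j ∈ {2,...,n}, for some ε > 0. Then every eigenfunction or associated function u = (u₁,...,u_n) of L satisfies u₁(x) = 0 for x ∈ [0,ε]; consequently the closed linear span of the root functions of L has infinite codimension in L²([0,1];ℂⁿ). -/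
open Matrix MeasureTheory

/-- `u` is a root function (eigenfunction or associated function) of the operator
`L_{C,D}(Q) = -iB⁻¹y' + Q(x)y`, `B = diag b`, with boundary conditions
`C y(0) + D y(1) = 0`: it is a nonzero member of a chain `u_0 = 0, u_1, …, u_m = u` with
`L u_p = λ u_p + u_{p-1}` (equivalently `u_p' = iB(λu_p + u_{p-1} - Q u_p)`), each `u_p`
satisfying the boundary conditions. -/
def IsRootFunction {n : ℕ} (b : Fin n → ℂ) (Q : ℝ → Matrix (Fin n) (Fin n) ℂ)
    (C D : Matrix (Fin n) (Fin n) ℂ) (u : ℝ → Fin n → ℂ) : Prop :=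
  ∃ (lam : ℂ) (m : ℕ) (ch : ℕ → ℝ → Fin n → ℂ),
    1 ≤ m ∧ ch 0 = 0 ∧ ch m = u ∧ u ≠ 0 ∧
    ∀ p, 1 ≤ p → p ≤ m →
      (∀ x : ℝ, HasDerivAt (ch p)
        (Complex.I • (Matrix.diagonal b *ᵥ
          (lam • ch p x + ch (p-1) x - Q x *ᵥ ch p x))) x) ∧
      C *ᵥ ch p 0 + D *ᵥ ch p 1 = 0

lemma ode_unique_zero (ε : ℝ) (hε : 0 < ε) (a : ℝ → ℂ)
    (ha : IntervalIntegrable a volume 0 ε)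
    (y : ℝ → ℂ) (hy : ∀ x ∈ Set.Icc (0:ℝ) ε, HasDerivAt y (a x * y x) x)
    (h0 : y 0 = 0) : ∀ x ∈ Set.Icc (0:ℝ) ε, y x = 0 := by
  set g : ℝ → ℂ := (Set.Icc (0:ℝ) ε).indicator a with hgdef
  have hgeq : ∀ x ∈ Set.Icc (0:ℝ) ε, g x = a x := fun x hx => Set.indicator_of_mem hx a
  have hgInt : Integrable g volume := by
    have : IntegrableOn a (Set.Icc 0 ε) volume :=
      (intervalIntegrable_iff_integrableOn_Icc_of_le hε.le).mp ha
    exact this.integrable_indicator measurableSet_Icc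
  have hgint : ∀ c d : ℝ, IntervalIntegrable g volume c d := fun c d =>
    hgInt.intervalIntegrable
  have hgnint : ∀ c d : ℝ, IntervalIntegrable (fun t => ‖g t‖) volume c d := fun c d =>
    hgInt.norm.intervalIntegrable
  set S : Set ℝ := {x | x ∈ Set.Icc (0:ℝ) ε ∧ ∀ t ∈ Set.Icc (0:ℝ) x, y t = 0} with hSdef
  have h0S : (0:ℝ) ∈ S := ⟨⟨le_refl _, hε.le⟩, fun t ht => by
    have : t = 0 := le_antisymm ht.2 ht.1
    rwa [this]⟩
  have hbdd : BddAbove S := ⟨ε, fun x hx => hx.1.2⟩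
  set T := sSup S with hTdef
  have hTS : ∀ x ∈ S, x ≤ T := fun x hx => le_csSup hbdd hx
  have hT0 : 0 ≤ T := hTS 0 h0S
  have hTε : T ≤ ε := csSup_le ⟨0, h0S⟩ fun x hx => hx.1.2
  have hlt : ∀ t, 0 ≤ t → t < T → y t = 0 := by
    intro t ht0 htT
    obtain ⟨s, hsS, hts⟩ := exists_lt_of_lt_csSup ⟨0, h0S⟩ htT
    exact hsS.2 t ⟨ht0, hts.le⟩
  have hyT : y T = 0 := by
    rcases eq_or_lt_of_le hT0 with h | h
    · rw [← h]; exact h0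
    · have hc : Filter.Tendsto y (nhdsWithin T (Set.Iio T)) (nhds (y T)) :=
        ((hy T ⟨hT0, hTε⟩).continuousAt).continuousWithinAt
      have hev : ∀ᶠ t in nhdsWithin T (Set.Iio T), y t = 0 := by
        filter_upwards [self_mem_nhdsWithin,
          (eventually_gt_nhds h).filter_mono nhdsWithin_le_nhds] with t h1 h2
        exact hlt t h2.le h1
      have : Filter.Tendsto (fun _ : ℝ => (0:ℂ)) (nhdsWithin T (Set.Iio T)) (nhds (y T)) :=
        hc.congr' hev
      exact tendsto_nhds_unique this tendsto_const_nhds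
  have hyT0 : ∀ t ∈ Set.Icc (0:ℝ) T, y t = 0 := by
    intro t ht
    rcases eq_or_lt_of_le ht.2 with h | h
    · rw [h]; exact hyT
    · exact hlt t ht.1 h
  rcases eq_or_lt_of_le hTε with hTeq | hTlt
  · intro x hx; exact hyT0 x (by rw [hTeq]; exact hx)
  · exfalso
    have hAcont : Continuous (fun x => ∫ t in T..x, ‖g t‖) :=
      intervalIntegral.continuous_primitive hgnint T
    obtain ⟨δ, hδpos, hδ⟩ := Metric.continuousAt_iff.mp hAcont.continuousAt
      (1/2) (by norm_num)
    set c := min (T + δ/2) ε with hcdef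
    have hTc : T < c := lt_min (by linarith) hTlt
    have hcε : c ≤ ε := min_le_right _ _
    have hAc : (∫ t in T..c, ‖g t‖) < 1/2 := by
      have hd : dist c T < δ := by
        rw [Real.dist_eq, abs_of_nonneg (by linarith [hTc.le] : (0:ℝ) ≤ c - T)]
        have : c ≤ T + δ/2 := min_le_left _ _
        linarith
      have := hδ hd
      rw [intervalIntegral.integral_same, dist_zero_right, Real.norm_eq_abs] at this
      exact lt_of_le_of_lt (le_abs_self _) this
    have hsubTc : Set.Icc T c ⊆ Set.Icc 0 ε := fun t ht =>
      ⟨le_trans hT0 ht.1, le_trans ht.2 hcε⟩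
    have hycont : ContinuousOn y (Set.Icc T c) := fun x hx =>
      ((hy x (hsubTc hx)).continuousAt).continuousWithinAt
    have hrep : ∀ x ∈ Set.Icc T c, y x = ∫ t in T..x, g t * y t := by
      intro x hx
      have hsub : Set.uIcc T x ⊆ Set.Icc 0 ε := by
        rw [Set.uIcc_of_le hx.1]
        exact fun t ht => hsubTc ⟨ht.1, le_trans ht.2 hx.2⟩
      have hderiv : ∀ t ∈ Set.uIcc T x, HasDerivAt y (g t * y t) t := fun t ht => by
        rw [hgeq t (hsub ht)]; exact hy t (hsub ht)
      have hint : IntervalIntegrable (fun t => g t * y t) volume T x :=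
        (hgint T x).mul_continuousOn
          (fun t ht => ((hy t (hsub ht)).continuousAt).continuousWithinAt)
      have := intervalIntegral.integral_eq_sub_of_hasDerivAt hderiv hint
      rw [this, hyT, sub_zero]
    obtain ⟨x₀, hx₀K, hx₀max⟩ := isCompact_Icc.exists_isMaxOn ⟨T, le_refl T, hTc.le⟩
      (continuous_norm.comp_continuousOn hycont)
    set M := ‖y x₀‖ with hMdef
    have hM0 : 0 ≤ M := norm_nonneg _
    have hsub0 : Set.uIcc T x₀ ⊆ Set.Icc 0 ε := by
      rw [Set.uIcc_of_le hx₀K.1]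
      exact fun t ht => hsubTc ⟨ht.1, le_trans ht.2 hx₀K.2⟩
    have hintgy : IntervalIntegrable (fun t => g t * y t) volume T x₀ :=
      (hgint T x₀).mul_continuousOn
        (fun t ht => ((hy t (hsub0 ht)).continuousAt).continuousWithinAt)
    have hMle : M ≤ (∫ t in T..c, ‖g t‖) * M := by
      calc M = ‖∫ t in T..x₀, g t * y t‖ := by rw [← hrep x₀ hx₀K]
        _ ≤ ∫ t in T..x₀, ‖g t * y t‖ :=
            intervalIntegral.norm_integral_le_integral_norm hx₀K.1
        _ ≤ ∫ t in T..x₀, ‖g t‖ * M := by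
            apply intervalIntegral.integral_mono_on hx₀K.1 hintgy.norm
              ((hgnint T x₀).mul_const M)
            intro t ht
            rw [norm_mul]
            refine mul_le_mul_of_nonneg_left ?_ (norm_nonneg _)
            exact hx₀max ⟨ht.1, le_trans ht.2 hx₀K.2⟩
        _ = (∫ t in T..x₀, ‖g t‖) * M := intervalIntegral.integral_mul_const M _
        _ ≤ (∫ t in T..c, ‖g t‖) * M := by
            refine mul_le_mul_of_nonneg_right ?_ hM0
            refine intervalIntegral.integral_mono_interval (le_refl T) hx₀K.1 hx₀K.2
              ?_ (hgnint T c)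
            exact Filter.Eventually.of_forall fun t => norm_nonneg _
    have hM : M = 0 := by nlinarith [hAc]
    have hcS : c ∈ S := by
      refine ⟨⟨le_trans hT0 hTc.le, hcε⟩, fun t ht => ?_⟩
      rcases le_total t T with h | h
      · exact hyT0 t ⟨ht.1, h⟩
      · have : ‖y t‖ ≤ M := hx₀max ⟨h, ht.2⟩
        rw [hM] at this
        exact norm_eq_zero.mp (le_antisymm this (norm_nonneg _))
    exact absurd (hTS c hcS) (not_le.mpr hTc)

/-- Corollary `cor:y1(0)=0`(ii): if the first boundary condition is
`y₁(0) = 0` and `q_{1j} ≡ 0` on `[0,ε]` for `j ≥ 2`, then the first component of every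
root function vanishes on `[0,ε]`; consequently every `f = (f₁,0,…,0)` with `f₁`
supported in `[0,ε]` is orthogonal to all root functions, and the closed linear span of
the root functions has infinite codimension in `L²([0,1];ℂⁿ)`. -/
theorem stmt13 (n : ℕ) [NeZero n] (b : Fin n → ℂ) (hb : ∀ j, b j ≠ 0)
    (Q : ℝ → Matrix (Fin n) (Fin n) ℂ)
    (hQint : ∀ i j, IntervalIntegrable (fun x => Q x i j) volume 0 1)
    (C D : Matrix (Fin n) (Fin n) ℂ)
    (hC1 : C 0 0 = 1) (hC2 : ∀ k : Fin n, k ≠ 0 → C 0 k = 0) (hD : ∀ k : Fin n, D 0 k = 0)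
    (ε : ℝ) (hε : 0 < ε) (hε1 : ε ≤ 1)
    (hQ : ∀ x ∈ Set.Icc (0:ℝ) ε, ∀ j : Fin n, j ≠ 0 → Q x 0 j = 0) :
    (∀ u : ℝ → Fin n → ℂ, IsRootFunction b Q C D u →
        ∀ x ∈ Set.Icc (0:ℝ) ε, u x 0 = 0)
    ∧
    (∀ f : ℝ → Fin n → ℂ, IntervalIntegrable f volume 0 1 →
        (∀ x : ℝ, ∀ j : Fin n, j ≠ 0 → f x j = 0) →
        (∀ x ∈ Set.Icc ε (1:ℝ), f x 0 = 0) →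
        ∀ u : ℝ → Fin n → ℂ, IsRootFunction b Q C D u →
          (∫ x in (0:ℝ)..1, star (f x) ⬝ᵥ u x) = 0)
    ∧
    (∃ F : ℕ → ℝ → Fin n → ℂ, LinearIndependent ℂ F ∧
      ∀ k : ℕ, Continuous (F k) ∧
        ∀ u : ℝ → Fin n → ℂ, IsRootFunction b Q C D u →
          (∫ x in (0:ℝ)..1, star (F k x) ⬝ᵥ u x) = 0) := by
  -- Part 1
  have part1 : ∀ u : ℝ → Fin n → ℂ, IsRootFunction b Q C D u →
      ∀ x ∈ Set.Icc (0:ℝ) ε, u x 0 = 0 := by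
    rintro u ⟨lam, m, ch, hm, hch0, hchm, -, hchain⟩
    suffices h : ∀ p, p ≤ m → ∀ x ∈ Set.Icc (0:ℝ) ε, ch p x 0 = 0 by
      intro x hx; rw [← hchm]; exact h m le_rfl x hx
    intro p
    induction p with
    | zero => intro _ x _; rw [hch0]; rfl
    | succ p ih =>
      intro hpm
      have ihp : ∀ x ∈ Set.Icc (0:ℝ) ε, ch p x 0 = 0 := ih (by omega)
      obtain ⟨hder, hbc⟩ := hchain (p+1) (by omega) hpm
      simp only [Nat.add_sub_cancel] at hder
      -- boundary value
      have hy0 : ch (p+1) 0 0 = 0 := by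
        have h0 := congrFun hbc 0
        simp only [Pi.add_apply, Pi.zero_apply, Matrix.mulVec, dotProduct] at h0
        rwa [Finset.sum_eq_single 0 (fun k _ hk => by rw [hC2 k hk, zero_mul])
            (fun h => absurd (Finset.mem_univ 0) h), hC1, one_mul,
          Finset.sum_eq_zero (fun k _ => by rw [hD k, zero_mul]), add_zero] at h0
      -- component ODE
      have hy : ∀ z ∈ Set.Icc (0:ℝ) ε, HasDerivAt (fun t => ch (p+1) t 0)
          ((Complex.I * b 0 * (lam - Q z 0 0)) * ch (p+1) z 0) z := by
        intro z hz
        have hcomp := hasDerivAt_pi.mp (hder z) 0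
        refine hcomp.congr_deriv ?_
        rw [Pi.smul_apply, Matrix.mulVec_diagonal, smul_eq_mul]
        have hq0 : (Q z *ᵥ ch (p+1) z) 0 = Q z 0 0 * ch (p+1) z 0 := by
          simp only [Matrix.mulVec, dotProduct]
          exact Finset.sum_eq_single 0 (fun k _ hk => by rw [hQ z hz k hk, zero_mul])
            (fun h => absurd (Finset.mem_univ 0) h)
        rw [Pi.sub_apply, Pi.add_apply, Pi.smul_apply, smul_eq_mul, hq0, ihp z hz]
        ring
      have haint : IntervalIntegrable (fun z => Complex.I * b 0 * (lam - Q z 0 0))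
          volume 0 ε := by
        have h1 : IntervalIntegrable (fun z => Q z 0 0) volume 0 ε :=
          (hQint 0 0).mono_set (by
            rw [Set.uIcc_of_le hε.le, Set.uIcc_of_le (by norm_num : (0:ℝ) ≤ 1)]
            exact Set.Icc_subset_Icc le_rfl hε1)
        exact (intervalIntegrable_const.sub h1).const_mul _
      exact ode_unique_zero ε hε _ haint _ hy hy0
  have part2 : ∀ f : ℝ → Fin n → ℂ,
      (∀ x : ℝ, ∀ j : Fin n, j ≠ 0 → f x j = 0) →
      (∀ x ∈ Set.Icc ε (1:ℝ), f x 0 = 0) →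
      ∀ u : ℝ → Fin n → ℂ, IsRootFunction b Q C D u →
        (∫ x in (0:ℝ)..1, star (f x) ⬝ᵥ u x) = 0 := by
    intro f hfj hfε u hu
    have heq : Set.EqOn (fun x => star (f x) ⬝ᵥ u x) 0 (Set.uIcc 0 1) := by
      intro x hx
      rw [Set.uIcc_of_le (by norm_num : (0:ℝ) ≤ 1)] at hx
      show star (f x) ⬝ᵥ u x = 0
      simp only [dotProduct]
      apply Finset.sum_eq_zero
      intro j _
      rcases eq_or_ne j 0 with rfl | hj
      · rcases le_total x ε with h | h
        · rw [part1 u hu x ⟨hx.1, h⟩, mul_zero]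
        · rw [Pi.star_apply, hfε x ⟨h, hx.2⟩, star_zero, zero_mul]
      · rw [Pi.star_apply, hfj x j hj, star_zero, zero_mul]
    rw [intervalIntegral.integral_congr heq]
    simp
  refine ⟨part1, fun f _ => part2 f, ?_⟩
  -- Part 3: bump functions with disjoint supports
  set t : ℕ → ℝ → ℝ := fun k x => max 0 (min (x - ε/2^(k+1)) (ε/2^k - x)) with htdef
  set F : ℕ → ℝ → Fin n → ℂ := fun k x j => if j = 0 then ((t k x : ℝ) : ℂ) else 0
    with hFdef
  have htcont : ∀ k, Continuous (t k) := fun k =>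
    continuous_const.max ((continuous_id.sub continuous_const).min
      (continuous_const.sub continuous_id))
  have htε : ∀ k, ∀ x : ℝ, ε ≤ x → t k x = 0 := by
    intro k x hx
    apply max_eq_left
    refine le_trans (min_le_right _ _) ?_
    have h1 : ε/2^k ≤ ε := by
      have hk1 : (1:ℝ) ≤ 2^k := one_le_pow₀ (by norm_num : (1:ℝ) ≤ 2)
      rw [div_le_iff₀ (by positivity)]
      nlinarith
    linarith
  have htzero : ∀ i k : ℕ, i ≠ k → t i (3*ε/2^(k+2)) = 0 := by
    intro i k hik
    rcases lt_or_gt_of_ne hik with h | h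
    · apply max_eq_left
      refine le_trans (min_le_left _ _) ?_
      have h1 : (2:ℝ)^(i+1) ≤ 2^k := by
        apply pow_le_pow_right₀ (by norm_num) (by omega)
      have h2 : (0:ℝ) < 2^(i+1) := by positivity
      have h3 : (0:ℝ) < 2^(k+2) := by positivity
      have h4 : (2:ℝ)^(k+2) = 4*2^k := by ring
      rw [sub_nonpos, div_le_div_iff₀ h3 h2]
      nlinarith
    · apply max_eq_left
      refine le_trans (min_le_right _ _) ?_
      have h1 : (2:ℝ)^(k+2) ≤ 2^(i+1) := by
        apply pow_le_pow_right₀ (by norm_num) (by omega)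
      have h2 : (0:ℝ) < 2^(i+1) := by positivity
      have h3 : (0:ℝ) < 2^(k+2) := by positivity
      have h5 : (0:ℝ) < 2^i := by positivity
      have h4 : (2:ℝ)^(i+1) = 2*2^i := by ring
      rw [sub_nonpos, div_le_div_iff₀ h5 h3]
      nlinarith
  have htself : ∀ k : ℕ, t k (3*ε/2^(k+2)) = ε/2^(k+2) := by
    intro k
    have h2 : (0:ℝ) < 2^(k+2) := by positivity
    have e1 : 3*ε/2^(k+2) - ε/2^(k+1) = ε/2^(k+2) := by
      field_simp
      ring
    have e2 : ε/2^k - 3*ε/2^(k+2) = ε/2^(k+2) := by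
      field_simp
      ring
    rw [htdef]
    simp only
    rw [e1, e2, min_self]
    exact max_eq_right (by positivity)
  refine ⟨F, ?_, ?_⟩
  · rw [linearIndependent_iff']
    intro s gcoef hsum k hk
    have h1 := congrFun (congrFun hsum (3*ε/2^(k+2))) 0
    simp only [Finset.sum_apply, Pi.zero_apply, Pi.smul_apply, smul_eq_mul] at h1
    rw [Finset.sum_eq_single_of_mem k hk (fun i _ hik => by
        simp only [hFdef, if_pos rfl, htzero i k hik, Complex.ofReal_zero, mul_zero])] at h1
    simp only [hFdef, if_pos rfl, htself k] at h1
    rcases mul_eq_zero.mp h1 with h | h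
    · exact h
    · exfalso
      rw [Complex.ofReal_eq_zero] at h
      have : (0:ℝ) < ε/2^(k+2) := by positivity
      linarith [this]
  · intro k
    constructor
    · apply continuous_pi
      intro j
      rcases eq_or_ne j 0 with rfl | hj
      · simp only [hFdef, ↓reduceIte]
        exact Complex.continuous_ofReal.comp (htcont k)
      · simpa [hFdef, hj] using continuous_const
    · intro u hu
      apply part2
      · intro x j hj
        simp [hFdef, hj]
      · intro x hx
        simp [hFdef, htε k x hx.1]
      · exact hu
end
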